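/- arXiv:2210.10852 — 8 statements merged into one kernel-verified Lean document; each statement's English description precedes it below -/
import Mathlib

section
/- For any binary vector A = (A_1, …, A_p), the following are equivalent: (1) the matrix E[A^⊗ A^⊗ᵀ] is positive definite; (2) P(A = v) > 0 for every one of the 2^p vectors v ∈ {-1, 1}^p; (3) the σ-field σ(A_1, …, A_p) contains exactly 2^{2^p} distinct events, and every one of these events other than the empty set has positive probability. -/
open MeasureTheory

namespace BVN

variable {p : ℕ}

/-- The sign vector associated to a boolean vector. -/
noncomputable def vR (b : Fin p → Bool) (i : Fin p) : ℝ := if b i then 1 else -1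

lemma vR_bin (b : Fin p → Bool) (i : Fin p) : vR b i = -1 ∨ vR b i = 1 := by
  unfold vR; by_cases h : b i <;> simp [h]

/-- Orthogonality of characters: sum over boolean vectors. -/
lemma orth_b (S T : Finset (Fin p)) :
    ∑ b : Fin p → Bool, (∏ i ∈ S, vR b i) * (∏ i ∈ T, vR b i)
      = if S = T then (2:ℝ)^p else 0 := by
  classical
  have key : ∀ b : Fin p → Bool, (∏ i ∈ S, vR b i) * (∏ i ∈ T, vR b i)
      = ∏ i : Fin p, ((if i ∈ S then vR b i else 1) * (if i ∈ T then vR b i else 1)) := by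
    intro b
    rw [Finset.prod_mul_distrib, Fintype.prod_extend_by_one, Fintype.prod_extend_by_one]
  simp only [key]
  simp only [vR]
  have swap := Fintype.prod_sum (fun (i : Fin p) (y : Bool) =>
      (if i ∈ S then (if y then (1:ℝ) else -1) else 1) *
      (if i ∈ T then (if y then (1:ℝ) else -1) else 1))
  rw [← swap]
  have val : ∀ i : Fin p, (∑ y : Bool,
      ((if i ∈ S then (if y then (1:ℝ) else -1) else 1) *
       (if i ∈ T then (if y then (1:ℝ) else -1) else 1)))
      = if (i ∈ S ↔ i ∈ T) then 2 else 0 := by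
    intro i
    rw [Fintype.sum_bool]
    by_cases hS : i ∈ S <;> by_cases hT : i ∈ T <;> simp [hS, hT] <;> norm_num
  simp only [val]
  by_cases h : S = T
  · subst h
    simp
  · rw [if_neg h]
    obtain ⟨i, hi⟩ : ∃ i, ¬(i ∈ S ↔ i ∈ T) := by
      by_contra hc
      push_neg at hc
      exact h (Finset.ext fun i => (hc i))
    exact Finset.prod_eq_zero (Finset.mem_univ i) (by simp [hi])

/-- Dual orthogonality: sum over subsets. -/
lemma orth_S (b b' : Fin p → Bool) :
    ∑ S : Finset (Fin p), (∏ i ∈ S, vR b i) * (∏ i ∈ S, vR b' i)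
      = if b = b' then (2:ℝ)^p else 0 := by
  classical
  have key : ∀ S : Finset (Fin p), (∏ i ∈ S, vR b i) * (∏ i ∈ S, vR b' i)
      = ∏ i ∈ S, (vR b i * vR b' i) := by
    intro S; rw [Finset.prod_mul_distrib]
  simp only [key]
  have := Fintype.prod_add (fun i => vR b i * vR b' i) (fun _ => (1:ℝ))
  simp only [Finset.prod_const_one, mul_one] at this
  rw [← this]
  by_cases h : b = b'
  · subst h
    have : ∀ i : Fin p, vR b i * vR b i + 1 = 2 := by
      intro i; rcases vR_bin b i with hv | hv <;> rw [hv] <;> norm_num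
    simp only [this]
    simp
  · rw [if_neg h]
    obtain ⟨i, hi⟩ : ∃ i, b i ≠ b' i := by
      by_contra hc; push_neg at hc; exact h (funext hc)
    apply Finset.prod_eq_zero (Finset.mem_univ i)
    have : vR b i * vR b' i = -1 := by
      unfold vR
      cases hb : b i <;> cases hb' : b' i <;> simp_all
    rw [this]; ring

section Meas

variable {Ω : Type*}

/-- Boolean selector of a binary vector. -/
noncomputable def bsel (A : Fin p → Ω → ℝ) (ω : Ω) (i : Fin p) : Bool :=
  @decide (A i ω = 1) (Classical.dec _)

variable {A : Fin p → Ω → ℝ}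

lemma A_eq_vR_bsel (hAbin : ∀ i ω, A i ω = -1 ∨ A i ω = 1) (ω : Ω) (i : Fin p) :
    A i ω = vR (bsel A ω) i := by
  unfold bsel vR
  by_cases h : A i ω = 1
  · simp [h]
  · rcases hAbin i ω with h' | h'
    · simp [h, h']
    · exact absurd h' h

lemma bsel_eq_iff (hAbin : ∀ i ω, A i ω = -1 ∨ A i ω = 1) (ω : Ω) (b : Fin p → Bool) :
    bsel A ω = b ↔ ∀ i, A i ω = vR b i := by
  constructor
  · rintro rfl i
    exact A_eq_vR_bsel hAbin ω i
  · intro h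
    funext i
    have hi := h i
    rw [A_eq_vR_bsel hAbin ω i] at hi
    unfold vR at hi
    cases hb : bsel A ω i <;> cases hb' : b i <;> simp [hb, hb'] at hi ⊢
    · norm_num at hi
    · norm_num at hi

lemma bsel_meas {m : MeasurableSpace Ω} (hAmeas : ∀ i, @Measurable Ω ℝ m _ (A i)) :
    @Measurable Ω (Fin p → Bool) m _ (bsel A) := by
  letI := m
  apply measurable_pi_lambda
  intro i
  apply measurable_to_countable'
  intro y
  cases y
  · have : (fun ω => bsel A ω i) ⁻¹' {false} = (A i ⁻¹' {1})ᶜ := by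
      ext ω; simp [bsel]
    rw [this]
    exact ((hAmeas i) (measurableSet_singleton 1)).compl
  · have : (fun ω => bsel A ω i) ⁻¹' {true} = A i ⁻¹' {1} := by
      ext ω; simp [bsel]
    rw [this]
    exact (hAmeas i) (measurableSet_singleton 1)

lemma meas_iff [inst : MeasurableSpace Ω] (hAbin : ∀ i ω, A i ω = -1 ∨ A i ω = 1)
    (s : Set Ω) :
    MeasurableSet[⨆ i, MeasurableSpace.comap (A i) inferInstance] s ↔
      ∃ B : Set (Fin p → Bool), bsel A ⁻¹' B = s := by
  constructor
  · intro hs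
    have hle : (⨆ i, MeasurableSpace.comap (A i) inferInstance) ≤
        MeasurableSpace.comap (bsel A) inferInstance := by
      refine iSup_le fun i => ?_
      have hcomp : A i = (fun b => vR b i) ∘ bsel A :=
        funext fun ω => A_eq_vR_bsel hAbin ω i
      calc MeasurableSpace.comap (A i) inferInstance
          = MeasurableSpace.comap (bsel A)
              (MeasurableSpace.comap (fun b => vR b i) inferInstance) := by
            rw [MeasurableSpace.comap_comp, ← hcomp]
        _ ≤ MeasurableSpace.comap (bsel A) inferInstance :=
            MeasurableSpace.comap_mono (fun t _ => (Set.to_countable t).measurableSet)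
    have := hle s hs
    rw [MeasurableSpace.measurableSet_comap] at this
    obtain ⟨B, _, hB⟩ := this
    exact ⟨B, hB⟩
  · rintro ⟨B, rfl⟩
    have hmb : @Measurable Ω (Fin p → Bool)
        (⨆ i, MeasurableSpace.comap (A i) inferInstance) _ (bsel A) := by
      apply bsel_meas
      intro i
      exact measurable_iff_comap_le.mpr (le_iSup (fun j => MeasurableSpace.comap (A j) inferInstance) i)
    exact hmb (Set.to_countable B).measurableSet

lemma integral_comp_bsel [MeasurableSpace Ω] (μ : Measure Ω) [IsProbabilityMeasure μ]
    (hAmeas : ∀ i, Measurable (A i)) (c : (Fin p → Bool) → ℝ) :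
    ∫ ω, c (bsel A ω) ∂μ
      = ∑ b : Fin p → Bool, (μ (bsel A ⁻¹' {b})).toReal * c b := by
  have hb : Measurable (bsel A) := bsel_meas hAmeas
  have hc : Measurable c := fun s _ => (Set.to_countable _).measurableSet
  rw [← integral_map hb.aemeasurable hc.aestronglyMeasurable]
  rw [integral_fintype (Integrable.of_finite)]
  refine Finset.sum_congr rfl fun b _ => ?_
  rw [measureReal_def, Measure.map_apply hb (measurableSet_singleton b), smul_eq_mul]

end Meas

/-- Quadratic form identity (pure algebra). -/
lemma quad (w : (Fin p → Bool) → ℝ) (x : Finset (Fin p) → ℝ) :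
    ∑ S : Finset (Fin p), x S *
        ∑ T : Finset (Fin p),
          (∑ b : Fin p → Bool, w b * ((∏ i ∈ S, vR b i) * (∏ i ∈ T, vR b i))) * x T
      = ∑ b : Fin p → Bool, w b * (∑ S : Finset (Fin p), x S * ∏ i ∈ S, vR b i) ^ 2 := by
  have : ∀ b : Fin p → Bool,
      w b * (∑ S : Finset (Fin p), x S * ∏ i ∈ S, vR b i) ^ 2
        = ∑ S : Finset (Fin p), ∑ T : Finset (Fin p),
            x S * (w b * ((∏ i ∈ S, vR b i) * (∏ i ∈ T, vR b i)) * x T) := by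
    intro b
    rw [sq, Finset.sum_mul_sum]
    rw [Finset.mul_sum]
    refine Finset.sum_congr rfl fun S _ => ?_
    rw [Finset.mul_sum]
    refine Finset.sum_congr rfl fun T _ => ?_
    ring
  simp only [this]
  rw [Finset.sum_comm]
  refine Finset.sum_congr rfl fun S _ => ?_
  rw [Finset.mul_sum, Finset.sum_comm]
  refine Finset.sum_congr rfl fun T _ => ?_
  rw [Finset.sum_mul, Finset.mul_sum]

/-- Fourier inversion (pure algebra). -/
lemma finv (x : Finset (Fin p) → ℝ) (T : Finset (Fin p)) :
    ∑ b : Fin p → Bool,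
        (∑ S : Finset (Fin p), x S * ∏ i ∈ S, vR b i) * ∏ i ∈ T, vR b i
      = x T * 2 ^ p := by
  classical
  simp only [Finset.sum_mul]
  rw [Finset.sum_comm]
  have : ∀ S : Finset (Fin p),
      ∑ b : Fin p → Bool, x S * (∏ i ∈ S, vR b i) * ∏ i ∈ T, vR b i
        = x S * if S = T then (2:ℝ)^p else 0 := by
    intro S
    rw [← orth_b S T, Finset.mul_sum]
    refine Finset.sum_congr rfl fun b _ => ?_
    ring
  simp only [this]
  simp [mul_ite]

end BVN


open BVN in
/-- **Nondegeneracy of a binary vector** (Lemma 2). For a binary random vector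
`A = (A_1, …, A_p)`, the following are equivalent:
(1) the second moment matrix `E[A^⊗ A^⊗ᵀ]` is positive definite;
(2) `P(A = v) > 0` for every one of the `2^p` vectors `v ∈ {-1,1}^p`;
(3) the σ-field `σ(A_1, …, A_p)` contains exactly `2^(2^p)` distinct events, and every one
of these events other than the empty set has positive probability.
Here the power vector `A^⊗` is indexed by subsets `S ⊆ {1, …, p}`, with entries
`∏_{i ∈ S} A_i`. -/
theorem binary_vector_nondegeneracy_tfae
    {Ω : Type*} [MeasurableSpace Ω] (μ : Measure Ω) [IsProbabilityMeasure μ]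
    {p : ℕ} (A : Fin p → Ω → ℝ)
    (hAmeas : ∀ i, Measurable (A i))
    (hAbin : ∀ i ω, A i ω = -1 ∨ A i ω = 1) :
    List.TFAE
      [ -- (1) E[A^⊗ A^⊗ᵀ] is positive definite
        Matrix.PosDef
          (Matrix.of fun S T : Finset (Fin p) =>
            ∫ ω, (∏ i ∈ S, A i ω) * (∏ i ∈ T, A i ω) ∂μ),
        -- (2) every cell has positive probability
        ∀ v : Fin p → ℝ, (∀ i, v i = -1 ∨ v i = 1) →
          0 < μ {ω | ∀ i, A i ω = v i},
        -- (3) σ(A) has exactly 2^(2^p) events, all nonempty ones of positive probability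
        (Nat.card {s : Set Ω //
            MeasurableSet[⨆ i, MeasurableSpace.comap (A i) inferInstance] s}
          = 2 ^ (2 ^ p)) ∧
        (∀ s : Set Ω,
            MeasurableSet[⨆ i, MeasurableSpace.comap (A i) inferInstance] s →
            s ≠ ∅ → 0 < μ s) ] := by
  classical
  have hcell : ∀ b : Fin p → Bool,
      bsel A ⁻¹' {b} = {ω | ∀ i, A i ω = vR b i} := by
    intro b; ext ω; simpa using bsel_eq_iff hAbin ω b
  -- (2) ↔ P
  have hP2 : (∀ v : Fin p → ℝ, (∀ i, v i = -1 ∨ v i = 1) →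
      0 < μ {ω | ∀ i, A i ω = v i}) ↔
      (∀ b : Fin p → Bool, 0 < μ (bsel A ⁻¹' {b})) := by
    constructor
    · intro h b
      rw [hcell b]
      exact h (vR b) (vR_bin b)
    · intro h v hv
      set b : Fin p → Bool := fun i => @decide (v i = 1) (Classical.dec _) with hb
      have hvb : v = vR b := by
        funext i
        rcases hv i with h1 | h1
        · have hne : ¬ (v i = 1) := by rw [h1]; norm_num
          simp [vR, hb, h1, hne]
        · simp [vR, hb, h1]
      rw [hvb, ← hcell b]
      exact h b
  -- matrix entries
  have hM : ∀ S T : Finset (Fin p),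
      (∫ ω, (∏ i ∈ S, A i ω) * (∏ i ∈ T, A i ω) ∂μ)
        = ∑ b : Fin p → Bool, (μ (bsel A ⁻¹' {b})).toReal *
            ((∏ i ∈ S, vR b i) * (∏ i ∈ T, vR b i)) := by
    intro S T
    have hpt : ∀ ω, (∏ i ∈ S, A i ω) * (∏ i ∈ T, A i ω)
        = (fun b => (∏ i ∈ S, vR b i) * (∏ i ∈ T, vR b i)) (bsel A ω) := by
      intro ω
      simp only
      congr 1 <;> exact Finset.prod_congr rfl fun i _ => A_eq_vR_bsel hAbin ω i
    calc ∫ ω, (∏ i ∈ S, A i ω) * (∏ i ∈ T, A i ω) ∂μ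
        = ∫ ω, (fun b => (∏ i ∈ S, vR b i) * (∏ i ∈ T, vR b i)) (bsel A ω) ∂μ :=
          integral_congr_ae (Filter.Eventually.of_forall hpt)
      _ = _ := integral_comp_bsel μ hAmeas (fun b => (∏ i ∈ S, vR b i) * ∏ i ∈ T, vR b i)
  -- quadratic form
  have hQ : ∀ x : Finset (Fin p) → ℝ,
      dotProduct (star x) (Matrix.mulVec (Matrix.of fun S T : Finset (Fin p) =>
          ∫ ω, (∏ i ∈ S, A i ω) * (∏ i ∈ T, A i ω) ∂μ) x)
        = ∑ b : Fin p → Bool, (μ (bsel A ⁻¹' {b})).toReal *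
            (∑ S : Finset (Fin p), x S * ∏ i ∈ S, vR b i) ^ 2 := by
    intro x
    rw [← quad]
    simp only [dotProduct, Matrix.mulVec, Matrix.of_apply, hM, Pi.star_apply, star_trivial]
  -- (1) ↔ P
  have h1P : Matrix.PosDef (Matrix.of fun S T : Finset (Fin p) =>
        ∫ ω, (∏ i ∈ S, A i ω) * (∏ i ∈ T, A i ω) ∂μ) ↔
      (∀ b : Fin p → Bool, 0 < μ (bsel A ⁻¹' {b})) := by
    constructor
    · intro hPD b
      have hpos := hPD.dotProduct_mulVec_pos (x := fun S => ∏ i ∈ S, vR b i) ?_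
      swap
      · intro h0
        have := congrFun h0 ∅
        simp at this
      rw [hQ] at hpos
      have hFb : ∀ b' : Fin p → Bool,
          (∑ S : Finset (Fin p), (∏ i ∈ S, vR b i) * ∏ i ∈ S, vR b' i)
            = if b = b' then (2:ℝ)^p else 0 := fun b' => orth_S b b'
      rw [Finset.sum_eq_single b (fun b' _ hb' => by
          rw [hFb b', if_neg (fun h => hb' h.symm)]; ring) (by simp)] at hpos
      rw [hFb b, if_pos rfl] at hpos
      by_contra hc
      push_neg at hc
      have : μ (bsel A ⁻¹' {b}) = 0 := le_antisymm hc bot_le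
      rw [this] at hpos
      simp at hpos
    · intro hP
      refine Matrix.posDef_iff_dotProduct_mulVec.mpr ⟨?_, ?_⟩
      · show _ = _
        ext S T
        rw [Matrix.conjTranspose_apply, Matrix.of_apply, Matrix.of_apply, star_trivial]
        exact integral_congr_ae (Filter.Eventually.of_forall fun ω => mul_comm _ _)
      · intro x hx
        rw [hQ]
        have hF : ∃ b : Fin p → Bool,
            (∑ S : Finset (Fin p), x S * ∏ i ∈ S, vR b i) ≠ 0 := by
          by_contra hcon
          push_neg at hcon
          apply hx
          funext T
          have hfin := finv x T
          simp only [hcon, zero_mul, Finset.sum_const_zero] at hfin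
          have h2p : (0:ℝ) < 2 ^ p := by positivity
          have := hfin.symm
          rw [Pi.zero_apply]
          nlinarith
        obtain ⟨b, hb⟩ := hF
        refine Finset.sum_pos' (fun b' _ => mul_nonneg ENNReal.toReal_nonneg (sq_nonneg _))
          ⟨b, Finset.mem_univ b, mul_pos ?_ (pow_two_pos_of_ne_zero hb)⟩
        exact ENNReal.toReal_pos (hP b).ne' (measure_ne_top μ _)
  -- card of Set (Fin p → Bool)
  have hcardX : Nat.card (Set (Fin p → Bool)) = 2 ^ (2 ^ p) := by
    have e1 : Set (Fin p → Bool) ≃ ((Fin p → Bool) → Bool) :=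
      (Equiv.arrowCongr (Equiv.refl (Fin p → Bool)) Equiv.propEquivBool :
        ((Fin p → Bool) → Prop) ≃ ((Fin p → Bool) → Bool))
    rw [Nat.card_congr e1, Nat.card_fun]
    simp [Nat.card_eq_fintype_card]
  -- (3) ↔ P
  have h3P : ((Nat.card {s : Set Ω //
        MeasurableSet[⨆ i, MeasurableSpace.comap (A i) inferInstance] s}
          = 2 ^ (2 ^ p)) ∧
      (∀ s : Set Ω,
          MeasurableSet[⨆ i, MeasurableSpace.comap (A i) inferInstance] s →
          s ≠ ∅ → 0 < μ s)) ↔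
      (∀ b : Fin p → Bool, 0 < μ (bsel A ⁻¹' {b})) := by
    constructor
    · rintro ⟨hc, hpos⟩ b
      have hsurj : Function.Surjective (fun B : Set (Fin p → Bool) =>
          (⟨bsel A ⁻¹' B, (meas_iff hAbin _).mpr ⟨B, rfl⟩⟩ :
            {s : Set Ω //
              MeasurableSet[⨆ i, MeasurableSpace.comap (A i) inferInstance] s})) := by
        rintro ⟨s, hs⟩
        obtain ⟨B, hB⟩ := (meas_iff hAbin s).mp hs
        exact ⟨B, Subtype.ext hB⟩
      have hbij := (Nat.bijective_iff_surjective_and_card _).mpr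
        ⟨hsurj, by rw [hcardX, hc]⟩
      have hne : bsel A ⁻¹' {b} ≠ ∅ := by
        intro h0
        have h1 : ({b} : Set (Fin p → Bool)) = ∅ := by
          have := hbij.1 (a₁ := ({b} : Set (Fin p → Bool))) (a₂ := (∅ : Set (Fin p → Bool)))
            (Subtype.ext (by simpa [Set.preimage_empty] using h0))
          exact this
        simp at h1
      exact hpos _ ((meas_iff hAbin _).mpr ⟨{b}, rfl⟩) hne
    · intro hPb
      have hsurjb : Function.Surjective (bsel A) := by
        intro b
        obtain ⟨ω, hω⟩ := nonempty_of_measure_ne_zero (hPb b).ne'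
        exact ⟨ω, hω⟩
      have hinj : Function.Injective (fun B : Set (Fin p → Bool) => bsel A ⁻¹' B) :=
        Set.preimage_injective.mpr hsurjb
      constructor
      · have h1 : Nat.card {s : Set Ω //
            MeasurableSet[⨆ i, MeasurableSpace.comap (A i) inferInstance] s}
            = Nat.card (Set.range (fun B : Set (Fin p → Bool) => bsel A ⁻¹' B)) := by
          apply Nat.card_congr
          apply Equiv.subtypeEquivRight
          intro s
          rw [meas_iff hAbin s]
          simp [Set.mem_range]
        rw [h1, Nat.card_range_of_injective hinj, hcardX]
      · intro s hs hne
        obtain ⟨B, rfl⟩ := (meas_iff hAbin s).mp hs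
        obtain ⟨ω, hω⟩ := Set.nonempty_iff_ne_empty.mpr hne
        have hsub : bsel A ⁻¹' {bsel A ω} ⊆ bsel A ⁻¹' B :=
          Set.preimage_mono (Set.singleton_subset_iff.mpr hω)
        exact lt_of_lt_of_le (hPb (bsel A ω)) (measure_mono hsub)
  tfae_have 1 ↔ 2 := h1P.trans hP2.symm
  tfae_have 2 ↔ 3 := hP2.trans h3P.symm
  tfae_finish
end

section
/- Two binary vectors A = (A_1, …, A_{p_1}) and B = (B_1, …, B_{p_2}) defined on the same probability space are independent (as random vectors) if and only if Cov(A^⊗_i, B^⊗_j) = 0 for every coordinate pair (A^⊗_i, B^⊗_j) of their power vectors. -/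
open MeasureTheory ProbabilityTheory

section PowerVecAux

variable {Ω : Type*} [MeasurableSpace Ω] {μ : Measure Ω} [IsProbabilityMeasure μ]

private lemma aux_int {f : Ω → ℝ} (hf : Measurable f) {C : ℝ}
    (h : ∀ ω, ‖f ω‖ ≤ C) : Integrable f μ :=
  (integrable_const C).mono' hf.aestronglyMeasurable (Filter.Eventually.of_forall h)

private lemma aux_norm_prod {p : ℕ} (A : Fin p → Ω → ℝ)
    (hAbin : ∀ i ω, A i ω = -1 ∨ A i ω = 1) (S : Finset (Fin p)) (ω : Ω) :
    ‖∏ i ∈ S, A i ω‖ ≤ 1 := by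
  rw [norm_prod]
  have : ∀ i ∈ S, ‖A i ω‖ = 1 := by
    intro i _; rcases hAbin i ω with h | h <;> simp [h]
  rw [Finset.prod_congr rfl this]; simp

private lemma aux_indicator {p : ℕ} (A : Fin p → Ω → ℝ)
    (hAbin : ∀ i ω, A i ω = -1 ∨ A i ω = 1) (a : Fin p → ℝ)
    (ha : ∀ i, a i = -1 ∨ a i = 1) (ω : Ω) :
    (∏ i, (a i * A i ω + 1) / 2)
      = Set.indicator ((fun ω i => A i ω) ⁻¹' {a}) 1 ω := by
  classical
  rw [Set.indicator_apply]
  by_cases h : (fun i => A i ω) = a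
  · rw [if_pos (by simpa using h)]
    have : ∀ i ∈ Finset.univ, (a i * A i ω + 1) / 2 = 1 := by
      intro i _
      have hi : A i ω = a i := congrFun h i
      rcases ha i with h1 | h1 <;> rw [hi, h1] <;> norm_num
    rw [Finset.prod_congr rfl this]; simp
  · rw [if_neg (by simpa using h)]
    obtain ⟨i, hi⟩ := Function.ne_iff.mp h
    refine Finset.prod_eq_zero (Finset.mem_univ i) ?_
    rcases ha i with h1 | h1 <;> rcases hAbin i ω with h2 | h2 <;>
      simp [h1, h2] at hi ⊢

private lemma aux_expand {p : ℕ} (A : Fin p → Ω → ℝ) (a : Fin p → ℝ) (ω : Ω) :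
    (∏ i, (a i * A i ω + 1) / 2)
      = ∑ S : Finset (Fin p), ((∏ i ∈ S, a i) / 2 ^ p) * ∏ i ∈ S, A i ω := by
  classical
  rw [Finset.prod_div_distrib, Finset.prod_const, Finset.card_univ, Fintype.card_fin,
    Finset.prod_add, Finset.powerset_univ, Finset.sum_div]
  refine Finset.sum_congr rfl fun S _ => ?_
  rw [Finset.prod_mul_distrib]
  simp [div_mul_eq_mul_div, mul_comm, mul_assoc, mul_div_assoc]

private lemma aux_sum_factor {ι κ : Type*} [Fintype ι] [Fintype κ]
    (u : ι → Ω → ℝ) (v : κ → Ω → ℝ)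
    (hu : ∀ i, Integrable (u i) μ) (hv : ∀ j, Integrable (v j) μ)
    (huv : ∀ i j, Integrable (fun ω => u i ω * v j ω) μ)
    (h : ∀ i j, ∫ ω, u i ω * v j ω ∂μ = (∫ ω, u i ω ∂μ) * ∫ ω, v j ω ∂μ) :
    ∫ ω, (∑ i, u i ω) * (∑ j, v j ω) ∂μ
      = (∫ ω, ∑ i, u i ω ∂μ) * ∫ ω, ∑ j, v j ω ∂μ := by
  simp_rw [Finset.sum_mul_sum]
  rw [integral_finset_sum _ fun i _ => integrable_finset_sum _ fun j _ => huv i j]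
  have : ∀ i ∈ Finset.univ, ∫ ω, ∑ j, u i ω * v j ω ∂μ
      = ∑ j, (∫ ω, u i ω ∂μ) * ∫ ω, v j ω ∂μ := by
    intro i _
    rw [integral_finset_sum _ fun j _ => huv i j]
    exact Finset.sum_congr rfl fun j _ => h i j
  rw [Finset.sum_congr rfl this, ← Finset.sum_mul_sum,
    integral_finset_sum _ fun i _ => hu i, integral_finset_sum _ fun j _ => hv j]

private lemma aux_key {p₁ p₂ : ℕ} (A : Fin p₁ → Ω → ℝ) (B : Fin p₂ → Ω → ℝ)
    (hAmeas : ∀ i, Measurable (A i)) (hBmeas : ∀ j, Measurable (B j))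
    (hAbin : ∀ i ω, A i ω = -1 ∨ A i ω = 1)
    (hBbin : ∀ j ω, B j ω = -1 ∨ B j ω = 1)
    (h : ∀ (S : Finset (Fin p₁)) (T : Finset (Fin p₂)),
        ∫ ω, (∏ i ∈ S, A i ω) * (∏ j ∈ T, B j ω) ∂μ
          = (∫ ω, ∏ i ∈ S, A i ω ∂μ) * (∫ ω, ∏ j ∈ T, B j ω ∂μ))
    (a : Fin p₁ → ℝ) (ha : ∀ i, a i = -1 ∨ a i = 1)
    (b : Fin p₂ → ℝ) (hb : ∀ j, b j = -1 ∨ b j = 1) :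
    μ ((fun ω i => A i ω) ⁻¹' {a} ∩ (fun ω j => B j ω) ⁻¹' {b})
      = μ ((fun ω i => A i ω) ⁻¹' {a}) * μ ((fun ω j => B j ω) ⁻¹' {b}) := by
  classical
  set Ea := (fun ω i => A i ω) ⁻¹' {a} with hEadef
  set Fb := (fun ω j => B j ω) ⁻¹' {b} with hFbdef
  have hEa : MeasurableSet Ea :=
    (measurable_pi_lambda _ hAmeas) (measurableSet_singleton a)
  have hFb : MeasurableSet Fb :=
    (measurable_pi_lambda _ hBmeas) (measurableSet_singleton b)
  set u : Finset (Fin p₁) → Ω → ℝ :=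
    fun S ω => ((∏ i ∈ S, a i) / 2 ^ p₁) * ∏ i ∈ S, A i ω with hu_def
  set v : Finset (Fin p₂) → Ω → ℝ :=
    fun T ω => ((∏ j ∈ T, b j) / 2 ^ p₂) * ∏ j ∈ T, B j ω with hv_def
  have measPA : ∀ S : Finset (Fin p₁), Measurable fun ω => ∏ i ∈ S, A i ω :=
    fun S => Finset.measurable_prod _ fun i _ => hAmeas i
  have measPB : ∀ T : Finset (Fin p₂), Measurable fun ω => ∏ j ∈ T, B j ω :=
    fun T => Finset.measurable_prod _ fun j _ => hBmeas j
  have intPA : ∀ S : Finset (Fin p₁), Integrable (fun ω => ∏ i ∈ S, A i ω) μ :=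
    fun S => aux_int (measPA S) (aux_norm_prod A hAbin S)
  have intPB : ∀ T : Finset (Fin p₂), Integrable (fun ω => ∏ j ∈ T, B j ω) μ :=
    fun T => aux_int (measPB T) (aux_norm_prod B hBbin T)
  have intPAB : ∀ S T, Integrable (fun ω => (∏ i ∈ S, A i ω) * ∏ j ∈ T, B j ω) μ := by
    intro S T
    refine aux_int ((measPA S).mul (measPB T)) (C := 1) fun ω => ?_
    rw [norm_mul]
    calc ‖∏ i ∈ S, A i ω‖ * ‖∏ j ∈ T, B j ω‖ ≤ 1 * 1 :=
          mul_le_mul (aux_norm_prod A hAbin S ω) (aux_norm_prod B hBbin T ω)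
            (norm_nonneg _) zero_le_one
      _ = 1 := by norm_num
  have hu : ∀ S, Integrable (u S) μ := fun S => (intPA S).const_mul _
  have hv : ∀ T, Integrable (v T) μ := fun T => (intPB T).const_mul _
  have huv : ∀ S T, Integrable (fun ω => u S ω * v T ω) μ := by
    intro S T
    have : (fun ω => u S ω * v T ω) = fun ω =>
        (((∏ i ∈ S, a i) / 2 ^ p₁) * ((∏ j ∈ T, b j) / 2 ^ p₂)) *
          ((∏ i ∈ S, A i ω) * ∏ j ∈ T, B j ω) := by
      funext ω; simp only [hu_def, hv_def]; ring
    rw [this]; exact (intPAB S T).const_mul _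
  have h' : ∀ S T, ∫ ω, u S ω * v T ω ∂μ = (∫ ω, u S ω ∂μ) * ∫ ω, v T ω ∂μ := by
    intro S T
    have e1 : (fun ω => u S ω * v T ω) = fun ω =>
        (((∏ i ∈ S, a i) / 2 ^ p₁) * ((∏ j ∈ T, b j) / 2 ^ p₂)) *
          ((∏ i ∈ S, A i ω) * ∏ j ∈ T, B j ω) := by
      funext ω; simp only [hu_def, hv_def]; ring
    calc ∫ ω, u S ω * v T ω ∂μ
        = (((∏ i ∈ S, a i) / 2 ^ p₁) * ((∏ j ∈ T, b j) / 2 ^ p₂)) *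
            ∫ ω, (∏ i ∈ S, A i ω) * ∏ j ∈ T, B j ω ∂μ := by
          rw [e1, integral_const_mul]
      _ = (((∏ i ∈ S, a i) / 2 ^ p₁) * ((∏ j ∈ T, b j) / 2 ^ p₂)) *
            ((∫ ω, ∏ i ∈ S, A i ω ∂μ) * ∫ ω, ∏ j ∈ T, B j ω ∂μ) := by rw [h S T]
      _ = (∫ ω, u S ω ∂μ) * ∫ ω, v T ω ∂μ := by
          simp only [hu_def, hv_def, integral_const_mul]; ring
  have hfa : ∀ ω, (∏ i, (a i * A i ω + 1) / 2) = Set.indicator Ea 1 ω :=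
    aux_indicator A hAbin a ha
  have hfb : ∀ ω, (∏ j, (b j * B j ω + 1) / 2) = Set.indicator Fb 1 ω :=
    aux_indicator B hBbin b hb
  have key : (μ (Ea ∩ Fb)).toReal = (μ Ea).toReal * (μ Fb).toReal := by
    calc (μ (Ea ∩ Fb)).toReal
        = ∫ ω, Set.indicator (Ea ∩ Fb) 1 ω ∂μ :=
          (integral_indicator_one (hEa.inter hFb)).symm
      _ = ∫ ω, (∑ S : Finset (Fin p₁), u S ω) * ∑ T : Finset (Fin p₂), v T ω ∂μ := by
          refine integral_congr_ae (Filter.Eventually.of_forall fun ω => ?_)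
          rw [Set.inter_indicator_one, Pi.mul_apply, ← hfa ω, ← hfb ω,
            aux_expand A a ω, aux_expand B b ω]
      _ = (∫ ω, ∑ S : Finset (Fin p₁), u S ω ∂μ) *
            ∫ ω, ∑ T : Finset (Fin p₂), v T ω ∂μ :=
          aux_sum_factor u v hu hv huv h'
      _ = (μ Ea).toReal * (μ Fb).toReal := by
          congr 1
          · show _ = μ.real Ea
            rw [← integral_indicator_one hEa]
            refine integral_congr_ae (Filter.Eventually.of_forall fun ω => ?_)
            rw [← hfa ω, aux_expand A a ω]
          · show _ = μ.real Fb
            rw [← integral_indicator_one hFb]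
            refine integral_congr_ae (Filter.Eventually.of_forall fun ω => ?_)
            rw [← hfb ω, aux_expand B b ω]
  have h1 : μ (Ea ∩ Fb) ≠ ⊤ := measure_ne_top μ _
  have h2 : μ Ea * μ Fb ≠ ⊤ := ENNReal.mul_ne_top (measure_ne_top μ _) (measure_ne_top μ _)
  rw [← ENNReal.toReal_eq_toReal_iff' h1 h2, key, ENNReal.toReal_mul]

end PowerVecAux

/-- **Independence is equivalent to uncorrelation of power vectors** (Theorem 1, part 1).
Two binary vectors `A = (A_1, …, A_{p₁})` and `B = (B_1, …, B_{p₂})` on the same probability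
space are independent (as random vectors) if and only if `Cov(A^⊗_S, B^⊗_T) = 0` for every
pair of coordinates of their power vectors, i.e.
`E[A^⊗_S B^⊗_T] = E[A^⊗_S] E[B^⊗_T]` for all `S ⊆ {1,…,p₁}`, `T ⊆ {1,…,p₂}`. -/
theorem indep_iff_powerVec_uncorrelated
    {Ω : Type*} [MeasurableSpace Ω] (μ : Measure Ω) [IsProbabilityMeasure μ]
    {p₁ p₂ : ℕ} (A : Fin p₁ → Ω → ℝ) (B : Fin p₂ → Ω → ℝ)
    (hAmeas : ∀ i, Measurable (A i)) (hBmeas : ∀ j, Measurable (B j))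
    (hAbin : ∀ i ω, A i ω = -1 ∨ A i ω = 1)
    (hBbin : ∀ j ω, B j ω = -1 ∨ B j ω = 1) :
    IndepFun (fun ω i => A i ω) (fun ω j => B j ω) μ ↔
      ∀ (S : Finset (Fin p₁)) (T : Finset (Fin p₂)),
        ∫ ω, (∏ i ∈ S, A i ω) * (∏ j ∈ T, B j ω) ∂μ
          = (∫ ω, ∏ i ∈ S, A i ω ∂μ) * (∫ ω, ∏ j ∈ T, B j ω ∂μ) := by
  constructor
  · -- independence implies factorization
    intro h S T
    have hφ : Measurable fun x : Fin p₁ → ℝ => ∏ i ∈ S, x i :=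
      Finset.measurable_prod _ fun i _ => measurable_pi_apply i
    have hψ : Measurable fun x : Fin p₂ → ℝ => ∏ j ∈ T, x j :=
      Finset.measurable_prod _ fun j _ => measurable_pi_apply j
    have hInd : IndepFun (fun ω => ∏ i ∈ S, A i ω) (fun ω => ∏ j ∈ T, B j ω) μ :=
      h.comp hφ hψ
    have intA : Integrable (fun ω => ∏ i ∈ S, A i ω) μ :=
      aux_int (Finset.measurable_prod _ fun i _ => hAmeas i) (aux_norm_prod A hAbin S)
    have intB : Integrable (fun ω => ∏ j ∈ T, B j ω) μ :=
      aux_int (Finset.measurable_prod _ fun j _ => hBmeas j) (aux_norm_prod B hBbin T)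
    simpa using hInd.integral_mul_eq_mul_integral intA.aestronglyMeasurable intB.aestronglyMeasurable
  · -- factorization implies independence
    intro h
    rw [indepFun_iff_measure_inter_preimage_eq_mul]
    intro s t _ _
    classical
    set V₁ : Finset (Fin p₁ → ℝ) := Fintype.piFinset fun _ => ({-1, 1} : Finset ℝ) with hV₁
    set V₂ : Finset (Fin p₂ → ℝ) := Fintype.piFinset fun _ => ({-1, 1} : Finset ℝ) with hV₂
    set W₁ : Finset (Fin p₁ → ℝ) := V₁.filter (· ∈ s) with hW₁
    set W₂ : Finset (Fin p₂ → ℝ) := V₂.filter (· ∈ t) with hW₂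
    have hbinW₁ : ∀ a ∈ W₁, ∀ i, a i = -1 ∨ a i = 1 := by
      intro a haW i
      have : a ∈ V₁ := (Finset.mem_filter.mp haW).1
      rw [hV₁, Fintype.mem_piFinset] at this
      simpa using this i
    have hbinW₂ : ∀ b ∈ W₂, ∀ j, b j = -1 ∨ b j = 1 := by
      intro b hbW j
      have : b ∈ V₂ := (Finset.mem_filter.mp hbW).1
      rw [hV₂, Fintype.mem_piFinset] at this
      simpa using this j
    have hmemA : ∀ ω, (fun i => A i ω) ∈ V₁ := by
      intro ω; rw [hV₁, Fintype.mem_piFinset]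
      intro i; rcases hAbin i ω with hh | hh <;> simp [hh]
    have hmemB : ∀ ω, (fun j => B j ω) ∈ V₂ := by
      intro ω; rw [hV₂, Fintype.mem_piFinset]
      intro j; rcases hBbin j ω with hh | hh <;> simp [hh]
    have decompA : (fun ω i => A i ω) ⁻¹' s
        = ⋃ a ∈ W₁, (fun ω i => A i ω) ⁻¹' {a} := by
      ext ω
      simp only [Set.mem_preimage, Set.mem_iUnion, Set.mem_singleton_iff, hW₁,
        Finset.mem_filter, exists_prop]
      constructor
      · intro hω; exact ⟨fun i => A i ω, ⟨hmemA ω, hω⟩, rfl⟩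
      · rintro ⟨a, ⟨_, has⟩, rfl⟩; exact has
    have decompB : (fun ω j => B j ω) ⁻¹' t
        = ⋃ b ∈ W₂, (fun ω j => B j ω) ⁻¹' {b} := by
      ext ω
      simp only [Set.mem_preimage, Set.mem_iUnion, Set.mem_singleton_iff, hW₂,
        Finset.mem_filter, exists_prop]
      constructor
      · intro hω; exact ⟨fun j => B j ω, ⟨hmemB ω, hω⟩, rfl⟩
      · rintro ⟨b, ⟨_, hbs⟩, rfl⟩; exact hbs
    have hdisjA : (↑W₁ : Set (Fin p₁ → ℝ)).PairwiseDisjoint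
        (fun a => (fun ω i => A i ω) ⁻¹' {a}) := by
      intro a _ a' _ hne
      refine Set.disjoint_left.mpr fun ω h1 h2 => hne ?_
      rw [Set.mem_preimage, Set.mem_singleton_iff] at h1 h2
      rw [← h1, h2]
    have hdisjB : (↑W₂ : Set (Fin p₂ → ℝ)).PairwiseDisjoint
        (fun b => (fun ω j => B j ω) ⁻¹' {b}) := by
      intro b _ b' _ hne
      refine Set.disjoint_left.mpr fun ω h1 h2 => hne ?_
      rw [Set.mem_preimage, Set.mem_singleton_iff] at h1 h2
      rw [← h1, h2]
    have hEa : ∀ a : Fin p₁ → ℝ, MeasurableSet ((fun ω i => A i ω) ⁻¹' {a}) :=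
      fun a => (measurable_pi_lambda _ hAmeas) (measurableSet_singleton a)
    have hFb : ∀ b : Fin p₂ → ℝ, MeasurableSet ((fun ω j => B j ω) ⁻¹' {b}) :=
      fun b => (measurable_pi_lambda _ hBmeas) (measurableSet_singleton b)
    have hsumA : μ ((fun ω i => A i ω) ⁻¹' s)
        = ∑ a ∈ W₁, μ ((fun ω i => A i ω) ⁻¹' {a}) := by
      rw [decompA]; exact measure_biUnion_finset hdisjA fun a _ => hEa a
    have hsumB : μ ((fun ω j => B j ω) ⁻¹' t)
        = ∑ b ∈ W₂, μ ((fun ω j => B j ω) ⁻¹' {b}) := by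
      rw [decompB]; exact measure_biUnion_finset hdisjB fun b _ => hFb b
    have interdecomp : (fun ω i => A i ω) ⁻¹' s ∩ (fun ω j => B j ω) ⁻¹' t
        = ⋃ a ∈ W₁, ⋃ b ∈ W₂,
            ((fun ω i => A i ω) ⁻¹' {a} ∩ (fun ω j => B j ω) ⁻¹' {b}) := by
      rw [decompA, decompB, Set.iUnion₂_inter]
      exact Set.iUnion₂_congr fun a _ => Set.inter_iUnion₂ _ _
    have hsumAB : μ ((fun ω i => A i ω) ⁻¹' s ∩ (fun ω j => B j ω) ⁻¹' t)
        = ∑ a ∈ W₁, ∑ b ∈ W₂,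
            μ ((fun ω i => A i ω) ⁻¹' {a} ∩ (fun ω j => B j ω) ⁻¹' {b}) := by
      rw [interdecomp]
      rw [measure_biUnion_finset (f := fun a => ⋃ b ∈ W₂,
            ((fun ω i => A i ω) ⁻¹' {a} ∩ (fun ω j => B j ω) ⁻¹' {b})) ?_ ?_]
      · refine Finset.sum_congr rfl fun a _ => ?_
        exact measure_biUnion_finset
          (hdisjB.mono fun b => Set.inter_subset_right)
          fun b _ => (hEa a).inter (hFb b)
      · refine hdisjA.mono fun a => ?_
        exact Set.iUnion₂_subset fun b _ => Set.inter_subset_left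
      · exact fun a _ => W₂.measurableSet_biUnion fun b _ => (hEa a).inter (hFb b)
    rw [hsumAB, hsumA, hsumB, Finset.sum_mul_sum]
    refine Finset.sum_congr rfl fun a haW => Finset.sum_congr rfl fun b hbW => ?_
    exact aux_key A B hAmeas hBmeas hAbin hBbin h a (hbinW₁ a haW) b (hbinW₂ b hbW)
end

section
/- Let A = (A_1, …, A_p) be a nondegenerate binary vector, let H be a subgroup of G_A, and let k be the integer with |H| = 2^k. Then there exists S ⊆ G_A with |S| = k and ⟨S⟩ = H such that the random vector formed by the elements of S takes 2^k distinct values, each with positive probability. Furthermore, for any T ⊆ G_A with |T| < k, σ(T) ≠ σ(H). -/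
open MeasureTheory

/-- The σ-field generated by a set of real-valued functions. -/
def sigmaGen {Ω : Type*} (S : Set (Ω → ℝ)) : MeasurableSpace Ω :=
  ⨆ g ∈ S, MeasurableSpace.comap g inferInstance

namespace GroupDataReductionAux

lemma zmod2_cases : ∀ c : ZMod 2, c = 0 ∨ c = 1 := by decide

/-- The sign associated to an element of `ZMod 2`. -/
noncomputable def nu (c : ZMod 2) : ℝ := if c = 1 then -1 else 1

lemma nu_zero : nu 0 = 1 := by norm_num [nu]

lemma nu_one : nu 1 = -1 := by norm_num [nu]

lemma nu_pm (c : ZMod 2) : nu c = -1 ∨ nu c = 1 := by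
  rcases zmod2_cases c with h | h <;> subst h <;> simp [nu_zero, nu_one]

lemma one_add_one_zmod2 : (1 : ZMod 2) + 1 = 0 := by decide

lemma nu_add (a b : ZMod 2) : nu (a + b) = nu a * nu b := by
  rcases zmod2_cases a with ha | ha <;> rcases zmod2_cases b with hb | hb <;>
      subst ha <;> subst hb
  · norm_num [nu_zero]
  · norm_num [nu_zero]
  · norm_num [nu_zero]
  · rw [one_add_one_zmod2, nu_zero, nu_one]
    norm_num

lemma nu_inj {a b : ZMod 2} (h : nu a = nu b) : a = b := by
  rcases zmod2_cases a with ha | ha <;> rcases zmod2_cases b with hb | hb <;>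
    subst ha <;> subst hb <;> simp_all [nu_zero, nu_one] <;> norm_num at h

lemma nu_sum {ι : Type*} (t : Finset ι) (f : ι → ZMod 2) :
    nu (∑ i ∈ t, f i) = ∏ i ∈ t, nu (f i) := by
  classical
  induction t using Finset.induction_on with
  | empty => simp [nu_zero]
  | insert x s hx ih =>
      rw [Finset.sum_insert hx, Finset.prod_insert hx, nu_add, ih]

/-- The σ-algebra of sets that cannot separate points which all functions of `T` identify. -/
def sep {Ω : Type*} (T : Set (Ω → ℝ)) : MeasurableSpace Ω where
  MeasurableSet' M := ∀ ω₁ ω₂ : Ω, (∀ g ∈ T, g ω₁ = g ω₂) → (ω₁ ∈ M ↔ ω₂ ∈ M)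
  measurableSet_empty := fun _ _ _ => Iff.rfl
  measurableSet_compl := fun M hM ω₁ ω₂ h => by
    simp only [Set.mem_compl_iff]
    exact not_congr (hM ω₁ ω₂ h)
  measurableSet_iUnion := fun f hf ω₁ ω₂ h => by
    simp only [Set.mem_iUnion]
    exact exists_congr fun n => hf n ω₁ ω₂ h

lemma sigmaGen_le_sep {Ω : Type*} (T : Set (Ω → ℝ)) : sigmaGen T ≤ sep T := by
  refine iSup_le fun g => iSup_le fun hg => ?_
  intro M hM
  obtain ⟨B, hB, rfl⟩ := hM
  intro ω₁ ω₂ h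
  simp only [Set.mem_preimage, h g hg]

/-- Expressing a linear functional on `Fin p → ZMod 2` as a dot product. -/
lemma dot_eq {p : ℕ} (F : (Fin p → ZMod 2) →ₗ[ZMod 2] ZMod 2) (x : Fin p → ZMod 2) :
    ∑ i, x i * F (fun j => if i = j then 1 else 0) = F x := by
  classical
  conv_rhs => rw [pi_eq_sum_univ x]
  rw [map_sum]
  refine Finset.sum_congr rfl fun i _ => ?_
  rw [LinearMap.map_smul, smul_eq_mul]

end GroupDataReductionAux

open GroupDataReductionAux in
/-- **Group data reduction** (Theorem 4).
Let `A = (A_1, …, A_p)` be a nondegenerate binary vector, let `H` be a subgroup of `G_A`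
(the group of all products `∏_{i ∈ T} A_i` under pointwise multiplication), and let `k` be
the integer with `|H| = 2^k`.  Then there exists `S ⊆ G_A` with `|S| = k` and `⟨S⟩ = H`
such that the random vector formed by the elements of `S` takes `2^k` distinct values, each
with positive probability.  Furthermore, for any `T ⊆ G_A` with `|T| < k`,
`σ(T) ≠ σ(H)`. -/
theorem group_data_reduction
    {Ω : Type*} [MeasurableSpace Ω] (μ : Measure Ω) [IsProbabilityMeasure μ]
    {p : ℕ} (A : Fin p → Ω → ℝ)
    (hAmeas : ∀ i, Measurable (A i))
    (hAbin : ∀ i ω, A i ω = -1 ∨ A i ω = 1)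
    (hnondeg : ∀ v : Fin p → ℝ, (∀ i, v i = -1 ∨ v i = 1) →
      0 < μ {ω | ∀ i, A i ω = v i})
    (GA : Set (Ω → ℝ))
    (hGA : GA = {g | ∃ T : Finset (Fin p), g = fun ω => ∏ i ∈ T, A i ω})
    (H : Submonoid (Ω → ℝ)) (hH : (H : Set (Ω → ℝ)) ⊆ GA)
    (k : ℕ) (hk : Nat.card H = 2 ^ k) :
    (∃ S : Finset (Ω → ℝ), (S : Set (Ω → ℝ)) ⊆ GA ∧ S.card = k ∧
      Submonoid.closure (S : Set (Ω → ℝ)) = H ∧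
      Nat.card {v : {g // g ∈ S} → ℝ //
        0 < μ {ω | ∀ g : {g // g ∈ S}, (g : Ω → ℝ) ω = v g}} = 2 ^ k) ∧
    (∀ T : Finset (Ω → ℝ), (T : Set (Ω → ℝ)) ⊆ GA → T.card < k →
      sigmaGen (T : Set (Ω → ℝ)) ≠ sigmaGen (H : Set (Ω → ℝ))) := by
  classical
  haveI : Fact (Nat.Prime 2) := ⟨Nat.prime_two⟩
  -- the character map
  set χ : (Fin p → ZMod 2) → (Ω → ℝ) :=
    fun s ω => ∏ i, if s i = 1 then A i ω else 1 with hχdef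
  -- elements of GA take values in {-1, 1}
  have hprodpm : ∀ g ∈ GA, ∀ ω, g ω = -1 ∨ g ω = 1 := by
    intro g hg ω
    rw [hGA] at hg
    obtain ⟨T, rfl⟩ := hg
    exact Finset.prod_induction (fun i => A i ω) (fun x => x = -1 ∨ x = 1)
      (by rintro a b (rfl | rfl) (rfl | rfl) <;> norm_num)
      (Or.inr rfl) (fun i _ => hAbin i ω)
  -- χ lands in GA
  have hχmem : ∀ s, χ s ∈ GA := by
    intro s
    rw [hGA]
    refine ⟨Finset.univ.filter (fun i => s i = 1), ?_⟩
    funext ω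
    rw [hχdef]
    exact (Finset.prod_filter (fun i => s i = 1) (fun i => A i ω)).symm
  -- every element of GA is χ of something
  have hχsurj : ∀ g ∈ GA, ∃ s, χ s = g := by
    intro g hg
    rw [hGA] at hg
    obtain ⟨T, rfl⟩ := hg
    refine ⟨fun i => if i ∈ T then 1 else 0, ?_⟩
    funext ω
    rw [hχdef]
    simp only []
    rw [← Finset.prod_filter (fun i => (if i ∈ T then (1 : ZMod 2) else 0) = 1)
      (fun i => A i ω)]
    congr 1
    ext i
    by_cases h : i ∈ T <;> simp [h]
  -- positivity of atoms
  have hatom : ∀ u : Fin p → ZMod 2, 0 < μ {ω | ∀ i, A i ω = nu (u i)} :=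
    fun u => hnondeg _ (fun i => nu_pm (u i))
  -- evaluation of χ on atoms
  have heval : ∀ (u s : Fin p → ZMod 2) (ω : Ω), (∀ i, A i ω = nu (u i)) →
      χ s ω = nu (∑ i, s i * u i) := by
    intro u s ω hω
    rw [hχdef]
    simp only []
    rw [nu_sum]
    refine Finset.prod_congr rfl fun i _ => ?_
    rcases zmod2_cases (s i) with h | h <;> rw [h]
    · simp [nu_zero]
    · simp [hω i]
  -- χ is injective
  have hχinj : Function.Injective χ := by
    intro s s' h
    funext i₀
    obtain ⟨ω, hω⟩ := nonempty_of_measure_ne_zero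
      (hatom (fun j => if i₀ = j then 1 else 0)).ne'
    have h1 := heval _ s ω hω
    have h2 := heval _ s' ω hω
    rw [h] at h1
    have hsum : ∀ t : Fin p → ZMod 2,
        (∑ i, t i * (if i₀ = i then 1 else 0)) = t i₀ := by
      intro t
      simp [mul_ite, Finset.sum_ite_eq]
    rw [hsum] at h1 h2
    exact (nu_inj (h2.symm.trans h1)).symm
  -- squares are one
  have hχadd : ∀ s t, χ (s + t) = χ s * χ t := by
    intro s t
    funext ω
    rw [hχdef]
    simp only [Pi.mul_apply]
    rw [← Finset.prod_mul_distrib]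
    refine Finset.prod_congr rfl fun i _ => ?_
    rcases zmod2_cases (s i) with hs | hs <;> rcases zmod2_cases (t i) with ht | ht <;>
      rw [Pi.add_apply, hs, ht]
    · norm_num
    · norm_num
    · norm_num
    · rw [one_add_one_zmod2]
      rcases hAbin i ω with h | h <;> norm_num [h]
  have hχzero : χ 0 = 1 := by
    funext ω
    rw [hχdef]
    simp
  -- the submodule corresponding to H
  let H' : Submodule (ZMod 2) (Fin p → ZMod 2) :=
    { carrier := χ ⁻¹' (H : Set (Ω → ℝ))
      zero_mem' := by
        simp only [Set.mem_preimage, hχzero]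
        exact H.one_mem
      add_mem' := by
        intro a b ha hb
        simp only [Set.mem_preimage, hχadd]
        exact H.mul_mem ha hb
      smul_mem' := by
        intro c x hx
        rcases zmod2_cases c with h | h <;> subst h
        · simp only [zero_smul, Set.mem_preimage, hχzero]
          exact H.one_mem
        · simpa only [one_smul] using hx }
  have hH'mem : ∀ s, s ∈ H' ↔ χ s ∈ H := fun s => Iff.rfl
  -- card of H'
  have hcardH' : Nat.card H' = 2 ^ k := by
    rw [← hk]
    refine Nat.card_eq_of_bijective (fun s => ⟨χ s.1, s.2⟩) ⟨?_, ?_⟩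
    · intro a b hab
      exact Subtype.ext (hχinj (congrArg Subtype.val hab))
    · rintro ⟨h, hh⟩
      obtain ⟨s, rfl⟩ := hχsurj h (hH hh)
      exact ⟨⟨s, hh⟩, rfl⟩
  -- finrank of H' is k
  haveI : Finite H' := Subtype.finite
  haveI := Fintype.ofFinite H'
  have hfr : Module.finrank (ZMod 2) H' = k := by
    have hc : Fintype.card H' = 2 ^ Module.finrank (ZMod 2) H' := by
      have := Module.card_eq_pow_finrank (K := ZMod 2) (V := H')
      rwa [ZMod.card] at this
    have : (2 : ℕ) ^ Module.finrank (ZMod 2) H' = 2 ^ k := by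
      rw [← hc, ← Nat.card_eq_fintype_card, hcardH']
    exact Nat.pow_right_injective (le_refl 2) this
  -- a basis of H'
  let b : Module.Basis (Fin k) (ZMod 2) H' := Module.finBasisOfFinrankEq (ZMod 2) H' hfr
  -- the extension lemma: realizing any functional as an atom parameter
  have hdual : ∀ F : (Fin p → ZMod 2) →ₗ[ZMod 2] ZMod 2,
      ∃ u : Fin p → ZMod 2, ∀ x : Fin p → ZMod 2, (∑ i, x i * u i) = F x := by
    intro F
    exact ⟨fun i => F (fun j => if i = j then 1 else 0), fun x => dot_eq F x⟩
  -- basis values can be prescribed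
  have hext : ∀ ε : Fin k → ZMod 2, ∃ u : Fin p → ZMod 2,
      ∀ j, (∑ i, ((b j : Fin p → ZMod 2)) i * u i) = ε j := by
    intro ε
    obtain ⟨g, hg⟩ := LinearMap.exists_extend ((b.constr (ZMod 2)) ε)
    obtain ⟨u, hu⟩ := hdual g
    refine ⟨u, fun j => ?_⟩
    rw [hu]
    have : g ((b j : Fin p → ZMod 2)) = ((b.constr (ZMod 2)) ε) (b j) := by
      rw [← hg]; rfl
    rw [this, Module.Basis.constr_basis]
  -- the generating set S
  have hbinj : Function.Injective (fun j : Fin k => χ (b j : Fin p → ZMod 2)) := by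
    intro i j hij
    exact b.injective (Subtype.ext (hχinj hij))
  let S : Finset (Ω → ℝ) := Finset.univ.image (fun j : Fin k => χ (b j : Fin p → ZMod 2))
  have hmemS : ∀ j : Fin k, χ (b j : Fin p → ZMod 2) ∈ S := by
    intro j
    exact Finset.mem_image_of_mem _ (Finset.mem_univ j)
  have hSsub : (S : Set (Ω → ℝ)) ⊆ GA := by
    intro g hg
    simp only [S, Finset.coe_image, Set.mem_image] at hg
    obtain ⟨j, _, rfl⟩ := hg
    exact hχmem _
  have hScard : S.card = k := by
    rw [Finset.card_image_of_injective _ hbinj, Finset.card_univ, Fintype.card_fin]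
  -- closure of S is H
  have hclosure : Submonoid.closure (S : Set (Ω → ℝ)) = H := by
    refine le_antisymm (Submonoid.closure_le.2 ?_) ?_
    · intro g hg
      simp only [S, Finset.coe_image, Set.mem_image] at hg
      obtain ⟨j, _, rfl⟩ := hg
      exact (b j).2
    · intro h hh
      obtain ⟨s, rfl⟩ := hχsurj h (hH hh)
      have hsH' : s ∈ H' := hh
      have hspan : (⟨s, hsH'⟩ : H') ∈ Submodule.span (ZMod 2) (Set.range b) := by
        rw [b.span_eq]; trivial
      have key : ∀ (x : H'), x ∈ Submodule.span (ZMod 2) (Set.range b) →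
          χ (x : Fin p → ZMod 2) ∈ Submonoid.closure (S : Set (Ω → ℝ)) := by
        intro x hx
        induction hx using Submodule.span_induction with
        | mem x hx =>
            obtain ⟨j, rfl⟩ := hx
            exact Submonoid.subset_closure (hmemS j)
        | zero =>
            have : ((0 : H') : Fin p → ZMod 2) = 0 := rfl
            rw [this, hχzero]
            exact Submonoid.one_mem _
        | add x y _ _ hx hy =>
            have : ((x + y : H') : Fin p → ZMod 2) = (x : Fin p → ZMod 2) + y := rfl
            rw [this, hχadd]
            exact Submonoid.mul_mem _ hx hy
        | smul c x _ hx =>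
            rcases zmod2_cases c with h | h <;> subst h
            · simp only [zero_smul, ZeroMemClass.coe_zero, hχzero]
              exact Submonoid.one_mem _
            · simp only [one_smul]
              exact hx
      exact key ⟨s, hsH'⟩ hspan
  -- positivity of all sign patterns of S
  have hSpos : ∀ v : {g // g ∈ S} → ℝ, (∀ g, v g = -1 ∨ v g = 1) →
      0 < μ {ω | ∀ g : {g // g ∈ S}, (g : Ω → ℝ) ω = v g} := by
    intro v hv
    obtain ⟨u, hu⟩ := hext (fun j => if v ⟨χ (b j : Fin p → ZMod 2), hmemS j⟩ = 1 then 0 else 1)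
    refine lt_of_lt_of_le (hatom u) (measure_mono ?_)
    intro ω hω g
    obtain ⟨j, _, hj⟩ := Finset.mem_image.1 g.2
    have hgeq : g = ⟨χ (b j : Fin p → ZMod 2), hmemS j⟩ := Subtype.ext hj.symm
    rw [hgeq]
    have := heval u (b j : Fin p → ZMod 2) ω hω
    show χ (b j : Fin p → ZMod 2) ω = v ⟨χ (b j : Fin p → ZMod 2), hmemS j⟩
    rw [this, hu j]
    rcases hv ⟨χ (b j : Fin p → ZMod 2), hmemS j⟩ with h | h <;> rw [h] <;>
      norm_num [nu_zero, nu_one]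
  -- the counting statement
  have hcount : Nat.card {v : {g // g ∈ S} → ℝ //
      0 < μ {ω | ∀ g : {g // g ∈ S}, (g : Ω → ℝ) ω = v g}} = 2 ^ k := by
    have hbij : Function.Bijective
        (fun bb : {g // g ∈ S} → Bool =>
          (⟨fun g => if bb g then -1 else 1, by
            refine hSpos _ (fun g => ?_)
            by_cases h : bb g
            · rw [if_pos h]; left; rfl
            · rw [if_neg h]; right; rfl⟩ :
            {v : {g // g ∈ S} → ℝ //
              0 < μ {ω | ∀ g : {g // g ∈ S}, (g : Ω → ℝ) ω = v g}})) := by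
      constructor
      · intro b1 b2 h12
        have := congrArg Subtype.val h12
        funext g
        have hg := congrFun this g
        by_cases h1 : b1 g <;> by_cases h2 : b2 g <;> simp [h1, h2] at hg ⊢ <;> norm_num at hg
      · rintro ⟨v, hv⟩
        obtain ⟨ω, hω⟩ := nonempty_of_measure_ne_zero hv.ne'
        refine ⟨fun g => if v g = -1 then true else false, Subtype.ext (funext fun g => ?_)⟩
        have hval : (g : Ω → ℝ) ω = v g := hω g
        have hpm := hprodpm _ (hSsub g.2) ω
        rw [hval] at hpm
        by_cases hb : v g = -1
        · simp [hb]
        · have h1 : v g = 1 := by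
            rcases hpm with h | h
            · exact absurd h hb
            · exact h
          simp only [h1, hb]
          norm_num
    rw [← Nat.card_eq_of_bijective _ hbij]
    rw [Nat.card_eq_fintype_card, Fintype.card_fun, Fintype.card_bool, Fintype.card_coe, hScard]
  refine ⟨⟨S, hSsub, hScard, hclosure, hcount⟩, ?_⟩
  -- Part 2
  intro T hT hTcard heq
  -- the span of the exponents of T
  let t : Finset (Fin p → ZMod 2) := T.preimage χ hχinj.injOn
  let U : Submodule (ZMod 2) (Fin p → ZMod 2) := Submodule.span (ZMod 2) (t : Set (Fin p → ZMod 2))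
  have htcard : t.card ≤ T.card := by
    refine Finset.card_le_card_of_injOn χ ?_ hχinj.injOn
    intro s hs
    exact Finset.mem_preimage.1 hs
  have hUrank : Module.finrank (ZMod 2) U ≤ T.card :=
    le_trans (finrank_span_finset_le_card t) htcard
  -- H' is not contained in U
  have hnotle : ¬ H' ≤ U := by
    intro hle
    have h1 : Module.finrank (ZMod 2) H' ≤ Module.finrank (ZMod 2) U :=
      Submodule.finrank_mono hle
    rw [hfr] at h1
    exact absurd (le_trans h1 hUrank) (not_le.2 hTcard)
  obtain ⟨h₀, hh₀H', hh₀U⟩ := SetLike.not_le_iff_exists.1 hnotle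
  -- a functional vanishing on U but not at h₀
  have hquot : (U.mkQ h₀ : (Fin p → ZMod 2) ⧸ U) ≠ 0 := by
    rw [Submodule.mkQ_apply, ne_eq, Submodule.Quotient.mk_eq_zero]
    exact hh₀U
  have hφ : ∃ φ : Module.Dual (ZMod 2) ((Fin p → ZMod 2) ⧸ U), φ (U.mkQ h₀) ≠ 0 := by
    by_contra hcon
    push_neg at hcon
    exact hquot ((Module.forall_dual_apply_eq_zero_iff (ZMod 2) _).1 hcon)
  obtain ⟨φ, hφ⟩ := hφ
  set F : (Fin p → ZMod 2) →ₗ[ZMod 2] ZMod 2 := φ.comp U.mkQ with hFdef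
  have hFh₀ : F h₀ = 1 := by
    rcases zmod2_cases (F h₀) with h | h
    · exact absurd h hφ
    · exact h
  have hFU : ∀ s ∈ U, F s = 0 := by
    intro s hs
    have : U.mkQ s = 0 := by
      rw [Submodule.mkQ_apply, Submodule.Quotient.mk_eq_zero]
      exact hs
    rw [hFdef, LinearMap.comp_apply, this, map_zero]
  obtain ⟨u, hu⟩ := hdual F
  -- the two atoms
  obtain ⟨ω₁, hω₁⟩ := nonempty_of_measure_ne_zero (hatom u).ne'
  obtain ⟨ω₂, hω₂⟩ := nonempty_of_measure_ne_zero (hatom 0).ne'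
  -- all elements of T agree on ω₁ and ω₂
  have hTagree : ∀ g ∈ (T : Set (Ω → ℝ)), g ω₁ = g ω₂ := by
    intro g hg
    obtain ⟨s, rfl⟩ := hχsurj g (hT hg)
    have hst : s ∈ t := Finset.mem_preimage.2 hg
    have hsU : s ∈ U := Submodule.subset_span hst
    have h1 : χ s ω₁ = nu (F s) := by
      rw [heval u s ω₁ hω₁, hu s]
    have h2 : χ s ω₂ = nu 0 := by
      rw [heval 0 s ω₂ (fun i => by simpa using hω₂ i)]
      congr 1
      simp
    rw [h1, h2, hFU s hsU]
  -- h₀ gives an element of H separating ω₁ and ω₂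
  have hχh₀H : χ h₀ ∈ H := hh₀H'
  have hval₁ : χ h₀ ω₁ = -1 := by
    rw [heval u h₀ ω₁ hω₁, hu h₀, hFh₀, nu_one]
  have hval₂ : χ h₀ ω₂ = 1 := by
    rw [heval 0 h₀ ω₂ (fun i => by simpa using hω₂ i)]
    have : (∑ i, h₀ i * (0 : Fin p → ZMod 2) i) = 0 := by simp
    rw [this, nu_zero]
  -- the set h₀⁻¹ {-1} is measurable for sigmaGen H
  have hMmeas : MeasurableSet[sigmaGen (H : Set (Ω → ℝ))] (χ h₀ ⁻¹' {(-1 : ℝ)}) := by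
    have hle : MeasurableSpace.comap (χ h₀) inferInstance ≤ sigmaGen (H : Set (Ω → ℝ)) :=
      le_iSup₂ (f := fun (g : Ω → ℝ) (_ : g ∈ (H : Set (Ω → ℝ))) =>
        MeasurableSpace.comap g inferInstance) (χ h₀) hχh₀H
    exact hle _ ⟨{(-1 : ℝ)}, measurableSet_singleton _, rfl⟩
  rw [← heq] at hMmeas
  have hsep : MeasurableSet[sep (T : Set (Ω → ℝ))] (χ h₀ ⁻¹' {(-1 : ℝ)}) :=
    sigmaGen_le_sep _ _ hMmeas
  have hiff := hsep ω₁ ω₂ hTagree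
  have hmem₁ : ω₁ ∈ χ h₀ ⁻¹' {(-1 : ℝ)} := by
    simp [Set.mem_preimage, hval₁]
  have hmem₂ : ω₂ ∈ χ h₀ ⁻¹' {(-1 : ℝ)} := hiff.1 hmem₁
  simp only [Set.mem_preimage, Set.mem_singleton_iff, hval₂] at hmem₂
  norm_num at hmem₂
end

section
/- Let B ∈ {-1, 1} and let A = (A_1, …, A_p) be a nondegenerate binary vector on the same probability space, with E[B | A] = βᵀ A^⊗ almost surely. Let L = {Λ ∈ G_A : β_Λ ≠ 0} be the set of coordinates of A^⊗ with nonzero BELIEF coefficient, and let G_L = ⟨L⟩. Then B is conditionally independent of σ(G_A) given σ(G_L). -/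
open MeasureTheory

/-- Conditional independence of the σ-fields `m₁` and `m₂` given the σ-field `m`, under `μ`:
for all `m₁`-measurable `s` and `m₂`-measurable `t`,
`E[1_{s ∩ t} | m] = E[1_s | m] · E[1_t | m]` a.e. -/
noncomputable def CondIndepSigma {Ω : Type*} [MeasurableSpace Ω] (μ : Measure Ω)
    (m m₁ m₂ : MeasurableSpace Ω) : Prop :=
  ∀ s t : Set Ω, MeasurableSet[m₁] s → MeasurableSet[m₂] t →
    μ[(s ∩ t).indicator (fun _ => (1 : ℝ)) | m] =ᵐ[μ]
      fun ω => (μ[s.indicator (fun _ => (1 : ℝ)) | m]) ω *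
        (μ[t.indicator (fun _ => (1 : ℝ)) | m]) ω

lemma sigmaGen_le {Ω : Type*} {S : Set (Ω → ℝ)}
    {m : MeasurableSpace Ω} (h : ∀ g ∈ S, Measurable[m] g) : sigmaGen S ≤ m := by
  refine iSup₂_le fun g hg => ?_
  exact (measurable_iff_comap_le.mp (h g hg))

lemma measurable_of_mem_sigmaGen {Ω : Type*} {S : Set (Ω → ℝ)} {g : Ω → ℝ}
    (hg : g ∈ S) : Measurable[sigmaGen S] g := by
  refine measurable_iff_comap_le.mpr ?_
  exact le_iSup₂ (f := fun g _ => MeasurableSpace.comap g inferInstance) g hg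


/-- **Nonzero BELIEF coefficients and conditional independence** (Theorem 5, part 1).
Let `B ∈ {-1,1}` and let `A = (A_1, …, A_p)` be a nondegenerate binary vector on the same
probability space, with `E[B | A] = βᵀ A^⊗` almost surely.  Let
`L = {Λ ∈ G_A : β_Λ ≠ 0}` be the set of coordinates of `A^⊗` with nonzero BELIEF
coefficient and let `G_L = ⟨L⟩` be the subgroup it generates.  Then `B` is conditionally
independent of `σ(G_A)` given `σ(G_L)`. -/
theorem belief_nonzero_slopes_conditional_independence
    {Ω : Type*} [MeasurableSpace Ω] (μ : Measure Ω) [IsProbabilityMeasure μ]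
    {p : ℕ} (A : Fin p → Ω → ℝ) (B : Ω → ℝ)
    (hAmeas : ∀ i, Measurable (A i)) (hBmeas : Measurable B)
    (hAbin : ∀ i ω, A i ω = -1 ∨ A i ω = 1)
    (hBbin : ∀ ω, B ω = -1 ∨ B ω = 1)
    (hnondeg : ∀ v : Fin p → ℝ, (∀ i, v i = -1 ∨ v i = 1) →
      0 < μ {ω | ∀ i, A i ω = v i})
    (β : Finset (Fin p) → ℝ)
    (hβ : μ[B | ⨆ i, MeasurableSpace.comap (A i) inferInstance]
      =ᵐ[μ] fun ω => ∑ S : Finset (Fin p), β S * ∏ i ∈ S, A i ω) :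
    CondIndepSigma μ
      -- the conditioning σ-field σ(G_L), where G_L = ⟨L⟩, L = {Λ ∈ G_A : β_Λ ≠ 0}
      (sigmaGen (Submonoid.closure
        {g : Ω → ℝ | ∃ S : Finset (Fin p), β S ≠ 0 ∧ g = fun ω => ∏ i ∈ S, A i ω}
        : Set (Ω → ℝ)))
      -- the σ-field generated by B
      (MeasurableSpace.comap B inferInstance)
      -- the σ-field σ(G_A)
      (sigmaGen {g : Ω → ℝ | ∃ S : Finset (Fin p), g = fun ω => ∏ i ∈ S, A i ω}) := by
  rename_i mΩ _hprob
  classical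
  intro s t hs ht
  set mA : MeasurableSpace Ω := ⨆ i, MeasurableSpace.comap (A i) inferInstance with hmA_def
  set L : Set (Ω → ℝ) :=
    {g : Ω → ℝ | ∃ S : Finset (Fin p), β S ≠ 0 ∧ g = fun ω => ∏ i ∈ S, A i ω} with hL_def
  set m : MeasurableSpace Ω := sigmaGen (Submonoid.closure L : Set (Ω → ℝ)) with hm_def
  set f : Ω → ℝ := fun ω => ∑ S : Finset (Fin p), β S * ∏ i ∈ S, A i ω with hf_def
  -- basic σ-field inequalities
  have hAmeasA : ∀ i, Measurable[mA] (A i) := fun i =>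
    measurable_iff_comap_le.mpr (le_iSup (fun i => MeasurableSpace.comap (A i) inferInstance) i)
  have hprodA : ∀ S : Finset (Fin p), Measurable[mA] (fun ω => ∏ i ∈ S, A i ω) := by
    intro S
    exact Finset.measurable_prod S (fun i _ => hAmeasA i)
  have hmA_le : mA ≤ mΩ := by
    refine iSup_le fun i => measurable_iff_comap_le.mp (hAmeas i)
  have hm_le_mA : m ≤ mA := by
    refine sigmaGen_le fun g hg => ?_
    induction hg using Submonoid.closure_induction with
    | mem g hg => obtain ⟨S, _, rfl⟩ := hg; exact hprodA S
    | one => exact @measurable_const ℝ Ω _ mA 1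
    | mul g h _ _ hg hh => exact Measurable.mul hg hh
  have hm_le : m ≤ mΩ := hm_le_mA.trans hmA_le
  have hmt_le : sigmaGen {g : Ω → ℝ | ∃ S : Finset (Fin p), g = fun ω => ∏ i ∈ S, A i ω} ≤ mA := by
    refine sigmaGen_le fun g hg => ?_
    obtain ⟨S, rfl⟩ := hg; exact hprodA S
  -- t is measurable
  have htA : MeasurableSet[mA] t := hmt_le t ht
  have ht0 : MeasurableSet[mΩ] t := hmA_le t htA
  -- f is m-measurable
  have hf_m : Measurable[m] f := by
    refine Finset.measurable_sum _ fun S _ => ?_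
    by_cases hβS : β S = 0
    · simp only [hβS, zero_mul]; exact @measurable_const ℝ Ω _ m 0
    · exact (measurable_of_mem_sigmaGen (S := (Submonoid.closure L : Set (Ω → ℝ)))
        (Submonoid.subset_closure ⟨S, hβS, rfl⟩)).const_mul (β S)
  have hf_meas : Measurable[mΩ] f := hf_m.mono hm_le le_rfl
  -- boundedness / integrability
  have habs : ∀ S : Finset (Fin p), ∀ ω, |∏ i ∈ S, A i ω| = 1 := by
    intro S ω
    rw [Finset.abs_prod]
    refine Finset.prod_eq_one fun i _ => ?_
    rcases hAbin i ω with h | h <;> simp [h]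
  have hf_bound : ∀ ω, ‖f ω‖ ≤ ∑ S : Finset (Fin p), |β S| := by
    intro ω
    calc ‖f ω‖ ≤ ∑ S : Finset (Fin p), ‖β S * ∏ i ∈ S, A i ω‖ := norm_sum_le _ _
    _ = ∑ S : Finset (Fin p), |β S| := by
        refine Finset.sum_congr rfl fun S _ => ?_
        rw [Real.norm_eq_abs, abs_mul, habs S ω, mul_one]
  have hB_bound : ∀ ω, ‖B ω‖ ≤ 1 := by
    intro ω; rcases hBbin ω with h | h <;> simp [h]
  have int_of_bound : ∀ (g : Ω → ℝ) (C : ℝ), Measurable[mΩ] g → (∀ ω, ‖g ω‖ ≤ C) →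
      Integrable g μ := by
    intro g C hg hC
    exact ⟨hg.aestronglyMeasurable, HasFiniteIntegral.of_bounded (C := C) (ae_of_all _ hC)⟩
  set gt : Ω → ℝ := t.indicator (fun _ => (1 : ℝ)) with hgt_def
  have hgt_meas : Measurable[mΩ] gt := measurable_const.indicator ht0
  have hgt_bound : ∀ ω, ‖gt ω‖ ≤ 1 := by
    intro ω; rw [hgt_def]; by_cases hω : ω ∈ t <;> simp [Set.indicator_apply, hω]
  have hgt_mA : StronglyMeasurable[mA] gt :=
    (measurable_const.indicator htA : Measurable[mA] gt).stronglyMeasurable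
  have hB_int : Integrable B μ := int_of_bound B 1 hBmeas hB_bound
  have hgt_int : Integrable gt μ := int_of_bound gt 1 hgt_meas hgt_bound
  have hBgt_int : Integrable (fun ω => B ω * gt ω) μ := by
    refine int_of_bound _ 1 (hBmeas.mul hgt_meas) fun ω => ?_
    show ‖B ω * gt ω‖ ≤ 1
    rw [norm_mul]
    calc ‖B ω‖ * ‖gt ω‖ ≤ 1 * 1 :=
          mul_le_mul (hB_bound ω) (hgt_bound ω) (norm_nonneg _) zero_le_one
      _ = 1 := one_mul 1
  have hfgt_int : Integrable (fun ω => f ω * gt ω) μ := by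
    refine int_of_bound _ (∑ S : Finset (Fin p), |β S|) (hf_meas.mul hgt_meas) fun ω => ?_
    show ‖f ω * gt ω‖ ≤ _
    rw [norm_mul]
    calc ‖f ω‖ * ‖gt ω‖ ≤ (∑ S : Finset (Fin p), |β S|) * 1 :=
          mul_le_mul (hf_bound ω) (hgt_bound ω) (norm_nonneg _)
            (le_trans (norm_nonneg (f ω)) (hf_bound ω))
      _ = _ := mul_one _
  have hf_int : Integrable f μ := int_of_bound f _ hf_meas hf_bound
  -- Claim B: μ[B|m] =ᵐ f
  have claimB : μ[B | m] =ᵐ[μ] f := by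
    have h1 : μ[μ[B | mA] | m] =ᵐ[μ] μ[B | m] := condExp_condExp_of_le hm_le_mA hmA_le
    have h2 : μ[μ[B | mA] | m] =ᵐ[μ] μ[f | m] := condExp_congr_ae hβ
    have h3 : μ[f | m] = f :=
      condExp_of_stronglyMeasurable hm_le hf_m.stronglyMeasurable hf_int
    exact h1.symm.trans (h2.trans (by rw [h3]))
  -- Claim A: μ[B * gt | m] =ᵐ μ[f * gt | m]
  have claimA : μ[(fun ω => B ω * gt ω) | m] =ᵐ[μ] μ[(fun ω => f ω * gt ω) | m] := by
    have h1 : μ[μ[(fun ω => B ω * gt ω) | mA] | m] =ᵐ[μ] μ[(fun ω => B ω * gt ω) | m] :=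
      condExp_condExp_of_le hm_le_mA hmA_le
    have hpull : μ[gt * B | mA] =ᵐ[μ] gt * μ[B | mA] :=
      condExp_mul_of_stronglyMeasurable_left hgt_mA
        (by rw [Pi.mul_def]; simpa [mul_comm] using hBgt_int) hB_int
    have h2 : μ[(fun ω => B ω * gt ω) | mA] =ᵐ[μ] fun ω => gt ω * f ω := by
      have : (fun ω => B ω * gt ω) = gt * B := by funext ω; simp [mul_comm]
      rw [this]
      refine hpull.trans ?_
      filter_upwards [hβ] with ω hω
      simp only [Pi.mul_apply, hω]
    have h3 : μ[(fun ω => gt ω * f ω) | m] =ᵐ[μ] μ[(fun ω => f ω * gt ω) | m] := by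
      apply condExp_congr_ae; filter_upwards with ω; rw [mul_comm]
    exact h1.symm.trans ((condExp_congr_ae h2).trans h3)
  -- Claim C: pull-out for f
  have claimC : μ[(fun ω => f ω * gt ω) | m] =ᵐ[μ] fun ω => f ω * (μ[gt | m]) ω := by
    have := condExp_mul_of_stronglyMeasurable_left (m := m) hf_m.stronglyMeasurable
      (by simpa [Pi.mul_def] using hfgt_int) hgt_int
    filter_upwards [this] with ω hω
    simpa [Pi.mul_def] using hω
  -- decompose the indicator of s
  obtain ⟨E, hE, rfl⟩ := hs
  set c1 : ℝ := if (1 : ℝ) ∈ E then 1 else 0 with hc1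
  set cm : ℝ := if (-1 : ℝ) ∈ E then 1 else 0 with hcm
  set a : ℝ := (c1 + cm) / 2 with ha
  set b : ℝ := (c1 - cm) / 2 with hb
  have hind : ∀ ω, (B ⁻¹' E).indicator (fun _ => (1 : ℝ)) ω = a + b * B ω := by
    intro ω
    rcases hBbin ω with h | h
    · simp only [Set.indicator_apply, Set.mem_preimage, h, ha, hb]
      by_cases hmem : (-1 : ℝ) ∈ E <;> simp [hcm, hc1, hmem] <;> ring
    · simp only [Set.indicator_apply, Set.mem_preimage, h, ha, hb]
      by_cases hmem : (1 : ℝ) ∈ E <;> simp [hcm, hc1, hmem] <;> ring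
  have hindst : (B ⁻¹' E ∩ t).indicator (fun _ => (1 : ℝ))
      = fun ω => a * gt ω + b * (B ω * gt ω) := by
    funext ω
    have : (B ⁻¹' E ∩ t).indicator (fun _ => (1 : ℝ)) ω
        = (B ⁻¹' E).indicator (fun _ => (1 : ℝ)) ω * gt ω := by
      rw [hgt_def]
      by_cases h1 : ω ∈ B ⁻¹' E <;> by_cases h2 : ω ∈ t <;>
        simp [Set.indicator_apply, h1, h2]
    rw [this, hind ω]; ring
  -- indicator of s as a function
  have hinds : (B ⁻¹' E).indicator (fun _ => (1 : ℝ)) = fun ω => a + b * B ω := funext hind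
  -- LHS
  have hLHS : μ[(B ⁻¹' E ∩ t).indicator (fun _ => (1 : ℝ)) | m]
      =ᵐ[μ] fun ω => a * (μ[gt | m]) ω + b * ((μ[(fun ω => B ω * gt ω) | m]) ω) := by
    rw [hindst]
    have hadd : μ[(fun ω => a * gt ω + b * (B ω * gt ω)) | m]
        =ᵐ[μ] μ[(fun ω => a * gt ω) | m] + μ[(fun ω => b * (B ω * gt ω)) | m] :=
      condExp_add (hgt_int.const_mul a) (hBgt_int.const_mul b) m
    have hsm1 : μ[(fun ω => a * gt ω) | m] =ᵐ[μ] fun ω => a * (μ[gt | m]) ω := by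
      have := condExp_smul (μ := μ) (m := m) a gt
      filter_upwards [this] with ω hω
      simpa [Pi.smul_def, smul_eq_mul] using hω
    have hsm2 : μ[(fun ω => b * (B ω * gt ω)) | m]
        =ᵐ[μ] fun ω => b * ((μ[(fun ω => B ω * gt ω) | m]) ω) := by
      have := condExp_smul (μ := μ) (m := m) b (fun ω => B ω * gt ω)
      filter_upwards [this] with ω hω
      simpa [Pi.smul_def, smul_eq_mul] using hω
    filter_upwards [hadd, hsm1, hsm2] with ω h1 h2 h3
    rw [h1, Pi.add_apply, h2, h3]
  -- E[1_s | m]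
  -- E[1_s | m]
  have hEs : μ[(B ⁻¹' E).indicator (fun _ => (1 : ℝ)) | m] =ᵐ[μ] fun ω => a + b * f ω := by
    rw [hinds]
    have hadd : μ[(fun ω => a + b * B ω) | m]
        =ᵐ[μ] μ[(fun _ => a) | m] + μ[(fun ω => b * B ω) | m] :=
      condExp_add (integrable_const a) (hB_int.const_mul b) m
    have hconst : μ[(fun _ : Ω => a) | m] = fun _ => a := condExp_const hm_le a
    have hsm : μ[(fun ω => b * B ω) | m] =ᵐ[μ] fun ω => b * (μ[B | m]) ω := by
      have := condExp_smul (μ := μ) (m := m) b B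
      filter_upwards [this] with ω hω; simpa [Pi.smul_def, smul_eq_mul] using hω
    filter_upwards [hadd, hsm, claimB] with ω h1 h2 h3
    rw [h1, Pi.add_apply, hconst, h2, h3]
  -- combine
  filter_upwards [hLHS, hEs, claimA, claimC] with ω h1 h2 h3 h4
  rw [h1, h2, h3, h4]
  ring
end

section
/- Let B ∈ {-1, 1} and let A = (A_1, …, A_p) be a nondegenerate binary vector on the same probability space, with E[B | A] = βᵀ A^⊗ almost surely. Let S ⊆ G_A. If B is conditionally independent of σ(G_A) given σ(S), then β_Λ = 0 for every Λ ∈ G_A \ ⟨S⟩. -/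
open MeasureTheory

section BeliefAux

/-! ### Algebra on the hypercube `{-1,1}^p` via `ZMod 2` -/

lemma zmod2_cases (c : ZMod 2) : c = 0 ∨ c = 1 := by revert c; decide

/-- sign of a `ZMod 2` element -/
noncomputable def sgn2 (x : ZMod 2) : ℝ := if x = 0 then 1 else -1

lemma sgn2_zero : sgn2 0 = 1 := by simp [sgn2]
lemma sgn2_one : sgn2 1 = -1 := by norm_num [sgn2]

lemma sgn2_add (a b : ZMod 2) : sgn2 (a + b) = sgn2 a * sgn2 b := by
  rcases zmod2_cases a with ha | ha <;> rcases zmod2_cases b with hb | hb <;>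
    subst ha <;> subst hb <;> norm_num [sgn2] <;> decide

/-- character of the hypercube indexed by a finset -/
noncomputable def chi {p : ℕ} (T : Finset (Fin p)) (x : Fin p → ZMod 2) : ℝ :=
  ∏ i ∈ T, sgn2 (x i)

lemma chi_eq_sgn2_sum {p : ℕ} (T : Finset (Fin p)) (x : Fin p → ZMod 2) :
    chi T x = sgn2 (∑ i ∈ T, x i) := by
  classical
  induction T using Finset.cons_induction with
  | empty => simp [chi, sgn2_zero]
  | cons a s ha ih =>
    rw [chi, Finset.prod_cons, Finset.sum_cons, sgn2_add, ← ih]; rfl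

lemma chi_add {p : ℕ} (T : Finset (Fin p)) (x y : Fin p → ZMod 2) :
    chi T (x + y) = chi T x * chi T y := by
  simp only [chi, Pi.add_apply, sgn2_add, Finset.prod_mul_distrib]

lemma chi_mul_chi {p : ℕ} (T T' : Finset (Fin p)) (x : Fin p → ZMod 2) :
    chi T x * chi T' x = chi (symmDiff T T') x := by
  classical
  simp only [chi_eq_sgn2_sum, ← sgn2_add]
  congr 1
  have h1 : ∑ i ∈ T, x i = ∑ i ∈ T \ T', x i + ∑ i ∈ T ∩ T', x i := by
    rw [← Finset.sum_union (Finset.disjoint_sdiff_inter T T'), Finset.sdiff_union_inter]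
  have h2 : ∑ i ∈ T', x i = ∑ i ∈ T' \ T, x i + ∑ i ∈ T' ∩ T, x i := by
    rw [← Finset.sum_union (Finset.disjoint_sdiff_inter T' T), Finset.sdiff_union_inter]
  have h3 : ∑ i ∈ symmDiff T T', x i = ∑ i ∈ T \ T', x i + ∑ i ∈ T' \ T, x i := by
    rw [symmDiff_def, Finset.sup_eq_union, Finset.sum_union]
    exact disjoint_sdiff_sdiff
  have h4 : T ∩ T' = T' ∩ T := Finset.inter_comm T T'
  have hchar : ∀ z : ZMod 2, z + z = 0 := by decide
  rw [h1, h2, h3, h4]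
  abel_nf
  rw [two_smul]
  rw [hchar]
  abel

lemma sum_chi_eq_zero {p : ℕ} (T : Finset (Fin p)) (hT : T ≠ ∅) :
    ∑ x : Fin p → ZMod 2, chi T x = 0 := by
  classical
  obtain ⟨i₀, hi₀⟩ := Finset.nonempty_iff_ne_empty.mpr hT
  set c : Fin p → ZMod 2 := Pi.single i₀ 1 with hc
  have hchi_c : chi T c = -1 := by
    rw [chi_eq_sgn2_sum]
    have : ∑ i ∈ T, c i = 1 := by
      rw [hc]
      rw [Finset.sum_eq_single i₀]
      · simp
      · intro b _ hb; simp [Pi.single_apply, hb]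
      · intro h; exact absurd hi₀ h
    rw [this, sgn2_one]
  have key : ∑ x : Fin p → ZMod 2, chi T x = ∑ x : Fin p → ZMod 2, chi T (c + x) :=
    (Fintype.sum_equiv (Equiv.addLeft c) _ _ (fun x => rfl)).symm
  have : ∑ x : Fin p → ZMod 2, chi T (c + x) = - ∑ x : Fin p → ZMod 2, chi T x := by
    simp only [chi_add, hchi_c, neg_one_mul, Finset.sum_neg_distrib]
  linarith [key, this]

lemma sum_chi_mul_chi {p : ℕ} (T Λ : Finset (Fin p)) :
    ∑ x : Fin p → ZMod 2, chi T x * chi Λ x = if T = Λ then (2 : ℝ)^p else 0 := by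
  classical
  simp only [chi_mul_chi]
  by_cases h : T = Λ
  · subst h
    simp only [symmDiff_self, if_true]
    have : (⊥ : Finset (Fin p)) = ∅ := rfl
    simp only [this, chi, Finset.prod_empty, Finset.sum_const, nsmul_eq_mul, mul_one]
    rw [Finset.card_univ, Fintype.card_fun]
    simp
  · rw [if_neg h]
    apply sum_chi_eq_zero
    intro hbot
    exact h (symmDiff_eq_bot.mp hbot)

lemma sum_expansion {p : ℕ} (β : Finset (Fin p) → ℝ) (Λ : Finset (Fin p)) :
    ∑ x : Fin p → ZMod 2, (∑ T : Finset (Fin p), β T * chi T x) * chi Λ x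
      = 2^p * β Λ := by
  classical
  simp only [Finset.sum_mul]
  rw [Finset.sum_comm]
  simp only [mul_assoc, ← Finset.mul_sum, sum_chi_mul_chi]
  rw [Finset.sum_eq_single Λ]
  · simp [mul_comm]
  · intro b _ hb; simp [hb]
  · intro h; exact absurd (Finset.mem_univ Λ) h

/-! ### `F₂`-linear algebra: a vector orthogonal to a subgroup but not to `Λ` -/

/-- indicator vector of a finset -/
def indvec {p : ℕ} (T : Finset (Fin p)) : Fin p → ZMod 2 := fun i => if i ∈ T then 1 else 0

lemma indvec_injective {p : ℕ} : Function.Injective (indvec (p := p)) := by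
  intro T T' h
  ext i
  have := congrFun h i
  simp only [indvec] at this
  by_cases hT : i ∈ T <;> by_cases hT' : i ∈ T' <;> simp_all

lemma indvec_symmDiff {p : ℕ} (T T' : Finset (Fin p)) :
    indvec (symmDiff T T') = indvec T + indvec T' := by
  funext i
  simp only [indvec, Pi.add_apply, Finset.mem_symmDiff]
  by_cases hT : i ∈ T <;> by_cases hT' : i ∈ T' <;> simp_all <;> decide

lemma indvec_empty {p : ℕ} : indvec (p := p) ∅ = 0 := by
  funext i; simp [indvec]

lemma sum_indvec {p : ℕ} (T : Finset (Fin p)) :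
    indvec T = ∑ i ∈ T, Pi.single i (1 : ZMod 2) := by
  funext j
  rw [Finset.sum_apply]
  simp only [Pi.single_apply, indvec]
  rw [Finset.sum_ite_eq T j (fun _ => (1 : ZMod 2))]

/-- key duality lemma -/
lemma exists_perp {p : ℕ} (M : Set (Finset (Fin p))) (hM0 : ∅ ∈ M)
    (hMadd : ∀ T ∈ M, ∀ T' ∈ M, symmDiff T T' ∈ M) (Λ : Finset (Fin p)) (hΛ : Λ ∉ M) :
    ∃ b : Fin p → ZMod 2,
      (∀ T ∈ M, ∑ i ∈ T, b i = 0) ∧ (∑ i ∈ Λ, b i = 1) := by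
  haveI : Fact (Nat.Prime 2) := ⟨by norm_num⟩
  classical
  set V := Fin p → ZMod 2
  have hsmul : ∀ (c : ZMod 2) (w : V), w ∈ indvec '' M → c • w ∈ indvec '' M := by
    intro c w hw
    rcases zmod2_cases c with hc | hc
    · subst hc; rw [zero_smul]; exact ⟨∅, hM0, indvec_empty⟩
    · subst hc; rw [one_smul]; exact hw
  set K : Submodule (ZMod 2) V :=
    { carrier := indvec '' M
      zero_mem' := ⟨∅, hM0, indvec_empty⟩
      add_mem' := by
        rintro _ _ ⟨T, hT, rfl⟩ ⟨T', hT', rfl⟩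
        exact ⟨symmDiff T T', hMadd T hT T' hT', indvec_symmDiff T T'⟩
      smul_mem' := hsmul } with hK
  have hΛK : indvec Λ ∉ K := by
    rintro ⟨T, hT, hTeq⟩
    exact hΛ (indvec_injective hTeq ▸ hT)
  have hq : K.mkQ (indvec Λ) ≠ 0 := by
    rw [Submodule.mkQ_apply, ne_eq, Submodule.Quotient.mk_eq_zero]
    exact hΛK
  obtain ⟨g, hg⟩ : ∃ g : Module.Dual (ZMod 2) (V ⧸ K), g (K.mkQ (indvec Λ)) ≠ 0 := by
    by_contra h
    push_neg at h
    exact hq ((Module.forall_dual_apply_eq_zero_iff (ZMod 2) _).mp h)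
  set f : V →ₗ[ZMod 2] ZMod 2 := g ∘ₗ K.mkQ with hf
  have hfK : ∀ w ∈ K, f w = 0 := by
    intro w hw
    simp only [hf, LinearMap.comp_apply, Submodule.mkQ_apply,
      (Submodule.Quotient.mk_eq_zero K).mpr hw, map_zero]
  refine ⟨fun i => f (Pi.single i 1), ?_, ?_⟩
  · intro T hT
    have : ∑ i ∈ T, f (Pi.single i (1 : ZMod 2)) = f (indvec T) := by
      rw [sum_indvec, map_sum]
    rw [this]
    exact hfK _ ⟨T, hT, rfl⟩
  · have : ∑ i ∈ Λ, f (Pi.single i (1 : ZMod 2)) = f (indvec Λ) := by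
      rw [sum_indvec, map_sum]
    rw [this]
    have hne : f (indvec Λ) ≠ 0 := hg
    rcases zmod2_cases (f (indvec Λ)) with h | h
    · exact absurd h hne
    · exact h

/-- products over symmetric differences for square-one valued functions -/
lemma prod_symmDiff_of_sq_one {ι : Type*} [DecidableEq ι] (T T' : Finset ι) (f : ι → ℝ)
    (hf : ∀ i, f i * f i = 1) :
    (∏ i ∈ T, f i) * (∏ i ∈ T', f i) = ∏ i ∈ symmDiff T T', f i := by
  have h1 : ∏ i ∈ T, f i = (∏ i ∈ T \ T', f i) * ∏ i ∈ T ∩ T', f i := by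
    rw [← Finset.prod_union (Finset.disjoint_sdiff_inter T T'), Finset.sdiff_union_inter]
  have h2 : ∏ i ∈ T', f i = (∏ i ∈ T' \ T, f i) * ∏ i ∈ T' ∩ T, f i := by
    rw [← Finset.prod_union (Finset.disjoint_sdiff_inter T' T), Finset.sdiff_union_inter]
  have h3 : ∏ i ∈ symmDiff T T', f i = (∏ i ∈ T \ T', f i) * ∏ i ∈ T' \ T, f i := by
    rw [symmDiff_def, Finset.sup_eq_union, Finset.prod_union disjoint_sdiff_sdiff]
  have h4 : T ∩ T' = T' ∩ T := Finset.inter_comm T T'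
  have h5 : (∏ i ∈ T' ∩ T, f i) * ∏ i ∈ T' ∩ T, f i = 1 := by
    rw [← Finset.prod_mul_distrib]
    rw [Finset.prod_congr rfl (fun i _ => hf i), Finset.prod_const_one]
  rw [h1, h2, h3, h4]
  calc (∏ i ∈ T \ T', f i) * (∏ i ∈ T' ∩ T, f i) *
        ((∏ i ∈ T' \ T, f i) * ∏ i ∈ T' ∩ T, f i)
      = (∏ i ∈ T \ T', f i) * (∏ i ∈ T' \ T, f i) *
        ((∏ i ∈ T' ∩ T, f i) * ∏ i ∈ T' ∩ T, f i) := by ring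
    _ = (∏ i ∈ T \ T', f i) * ∏ i ∈ T' \ T, f i := by rw [h5, mul_one]

end BeliefAux

section CondAux

/-- a function strongly measurable w.r.t. `sigmaGen S` is constant on fibers of `S` -/
lemma sigmaGen_invariant {Ω : Type*} (S : Set (Ω → ℝ)) (g : Ω → ℝ)
    (hg : StronglyMeasurable[sigmaGen S] g) {ω ω' : Ω}
    (h : ∀ f ∈ S, f ω = f ω') : g ω = g ω' := by
  set m' : MeasurableSpace Ω :=
    { MeasurableSet' := fun E => ω ∈ E ↔ ω' ∈ E
      measurableSet_empty := Iff.rfl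
      measurableSet_compl := fun E hE => not_congr hE
      measurableSet_iUnion := fun E hE => by
        simp only [Set.mem_iUnion]
        exact exists_congr hE } with hm'
  have hle : sigmaGen S ≤ m' := by
    refine iSup₂_le fun f hf => ?_
    intro E hE
    obtain ⟨U, -, rfl⟩ := hE
    show ω ∈ f ⁻¹' U ↔ ω' ∈ f ⁻¹' U
    simp only [Set.mem_preimage, h f hf]
  have hmeas : MeasurableSet[sigmaGen S] (g ⁻¹' {g ω}) :=
    hg.measurable (measurableSet_singleton _)
  have := (hle _ hmeas).mp rfl
  exact (this : g ω' = g ω).symm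

/-- conditional independence of `B` and `mG` given `mS ≤ mG` forces
`E[B | mS] = E[B | mG]`. -/
lemma condexp_eq_of_ci {Ω : Type*} [m0 : MeasurableSpace Ω] (μ : Measure Ω)
    [IsProbabilityMeasure μ] {mS mG : MeasurableSpace Ω} (hSG : mS ≤ mG) (hG0 : mG ≤ m0)
    (B : Ω → ℝ) (hBmeas : Measurable[m0] B) (hBbin : ∀ ω, B ω = -1 ∨ B ω = 1)
    (hci : ∀ s t : Set Ω, MeasurableSet[MeasurableSpace.comap B inferInstance] s →
      MeasurableSet[mG] t →
      μ[(s ∩ t).indicator (fun _ => (1 : ℝ)) | mS] =ᵐ[μ]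
        fun ω => (μ[s.indicator (fun _ => (1 : ℝ)) | mS]) ω *
          (μ[t.indicator (fun _ => (1 : ℝ)) | mS]) ω) :
    μ[B | mS] =ᵐ[μ] μ[B | mG] := by
  have hS0 : mS ≤ m0 := hSG.trans hG0
  letI : MeasurableSpace Ω := m0
  set s : Set Ω := B ⁻¹' {1} with hs_def
  have hs : MeasurableSet[MeasurableSpace.comap B inferInstance] s :=
    ⟨{1}, measurableSet_singleton 1, rfl⟩
  have hsm0 : MeasurableSet[m0] s := hBmeas (measurableSet_singleton 1)
  set Is : Ω → ℝ := s.indicator (fun _ => (1 : ℝ)) with hIs_def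
  have hIs_int : Integrable Is μ := Integrable.indicator (μ := μ) (integrable_const 1) hsm0
  have hB_eq : ∀ ω, B ω = 2 * Is ω - 1 := by
    intro ω
    rcases hBbin ω with h | h
    · have hωs : ω ∉ s := by simp [hs_def, h]; norm_num
      simp [hIs_def, Set.indicator_of_notMem hωs, h]
    · have hωs : ω ∈ s := by simp [hs_def, h]
      simp [hIs_def, Set.indicator_of_mem hωs, h]; norm_num
  have hB_int : Integrable B μ := by
    refine (integrable_const (1 : ℝ)).mono' hBmeas.aestronglyMeasurable ?_
    filter_upwards with ω
    rcases hBbin ω with h | h <;> simp [h]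
  have hcondB : μ[B | mS] =ᵐ[μ] fun ω => 2 * (μ[Is | mS]) ω - 1 := by
    have h1 : B = ((2 : ℝ) • Is) - (fun _ => (1 : ℝ)) := by
      funext ω; simp [hB_eq ω]
    rw [h1]
    have h2 := condExp_sub (μ := μ) (m := mS) (hIs_int.smul (2 : ℝ)) (integrable_const (1 : ℝ))
    have h3 := condExp_smul (μ := μ) (m := mS) (2 : ℝ) Is
    have h4 : μ[(fun _ : Ω => (1:ℝ)) | mS] = fun _ => (1:ℝ) := condExp_const hS0 1
    filter_upwards [h2, h3] with ω h2ω h3ω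
    rw [h2ω]
    simp only [Pi.sub_apply, h4, h3ω, Pi.smul_apply, smul_eq_mul]
  refine ae_eq_condExp_of_forall_setIntegral_eq hG0 hB_int
    (fun t _ _ => (integrable_condExp (μ := μ)).integrableOn) (fun t ht _ => ?_)
    ((stronglyMeasurable_condExp.mono hSG).aestronglyMeasurable)
  have htm0 : MeasurableSet[m0] t := hG0 t ht
  set It : Ω → ℝ := t.indicator (fun _ => (1 : ℝ)) with hIt_def
  have hIt_int : Integrable It μ := (integrable_const (1 : ℝ)).indicator htm0
  have hIt_bdd : ∃ C, ∀ x, ‖It x‖ ≤ C := by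
    refine ⟨1, fun x => ?_⟩
    by_cases hx : x ∈ t <;> simp [hIt_def, Set.indicator_of_mem, Set.indicator_of_notMem, hx]
  set h : Ω → ℝ := μ[Is | mS] with hh_def
  have hh_int : Integrable h μ := integrable_condExp
  have hIth_int : Integrable (fun x => It x * h x) μ :=
    hh_int.bdd_mul hIt_int.aestronglyMeasurable (Filter.Eventually.of_forall hIt_bdd.choose_spec)
  have key1 : ∫ x, It x * h x ∂μ = ∫ x, (μ[Is | mS]) x * (μ[It | mS]) x ∂μ := by
    have e1 : ∫ x, It x * h x ∂μ = ∫ x, (h * It) x ∂μ := by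
      apply integral_congr_ae; filter_upwards with x; simp [mul_comm]
    have e2 : ∫ x, (h * It) x ∂μ = ∫ x, (μ[(h * It) | mS]) x ∂μ :=
      (integral_condExp hS0).symm
    have e3 : μ[(h * It) | mS] =ᵐ[μ] h * μ[It | mS] := by
      refine condExp_mul_of_stronglyMeasurable_left stronglyMeasurable_condExp ?_ hIt_int
      have : (h * It) = fun x => It x * h x := by funext x; simp [mul_comm]
      rw [this]; exact hIth_int
    rw [e1, e2, integral_congr_ae e3]
    rfl
  have key2 : ∫ x, (s ∩ t).indicator (fun _ => (1:ℝ)) x ∂μ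
      = ∫ x, (μ[Is | mS]) x * (μ[It | mS]) x ∂μ := by
    rw [← integral_condExp hS0 (f := (s ∩ t).indicator (fun _ => (1:ℝ)))]
    exact integral_congr_ae (hci s t hs ht)
  have hprod : ∀ x, It x * Is x = (s ∩ t).indicator (fun _ => (1:ℝ)) x := by
    intro x
    by_cases hxs : x ∈ s <;> by_cases hxt : x ∈ t <;>
      simp [hIs_def, hIt_def, Set.indicator, hxs, hxt]
  have hItIs_int : Integrable (fun x => It x * Is x) μ :=
    hIs_int.bdd_mul hIt_int.aestronglyMeasurable (Filter.Eventually.of_forall hIt_bdd.choose_spec)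
  have hRHS : ∫ x in t, B x ∂μ
      = 2 * (∫ x, (μ[Is | mS]) x * (μ[It | mS]) x ∂μ) - ∫ x, It x ∂μ := by
    rw [← integral_indicator htm0]
    have : t.indicator B = fun x => 2 * (It x * Is x) - It x := by
      funext x
      by_cases hx : x ∈ t <;>
        simp [Set.indicator, hIt_def, hx, hB_eq x]
    rw [this, integral_sub ((hItIs_int.const_mul 2)) hIt_int, integral_const_mul 2]
    congr 1
    rw [← key2]
    congr 1
    exact integral_congr_ae (Filter.Eventually.of_forall hprod)
  have hLHS : ∫ x in t, (μ[B | mS]) x ∂μ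
      = 2 * (∫ x, (μ[Is | mS]) x * (μ[It | mS]) x ∂μ) - ∫ x, It x ∂μ := by
    rw [← integral_indicator htm0]
    have e1 : t.indicator (μ[B | mS]) =ᵐ[μ] fun x => 2 * (It x * h x) - It x := by
      filter_upwards [hcondB] with x hx
      by_cases hxt : x ∈ t <;>
        simp [Set.indicator, hIt_def, hxt, hx, hh_def]
    rw [integral_congr_ae e1, integral_sub ((hIth_int.const_mul 2)) hIt_int,
      integral_const_mul 2, key1]
  rw [hLHS, hRHS]

end CondAux

/-- **Conditional independence forces zero BELIEF coefficients** (Theorem 5, part 2).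
Let `B ∈ {-1,1}` and let `A = (A_1, …, A_p)` be a nondegenerate binary vector on the same
probability space, with `E[B | A] = βᵀ A^⊗` almost surely.  Let `S ⊆ G_A`.  If `B` is
conditionally independent of `σ(G_A)` given `σ(S)`, then `β_Λ = 0` for every
`Λ ∈ G_A \ ⟨S⟩`. -/
theorem conditional_independence_forces_zero_belief_slopes
    {Ω : Type*} [MeasurableSpace Ω] (μ : Measure Ω) [IsProbabilityMeasure μ]
    {p : ℕ} (A : Fin p → Ω → ℝ) (B : Ω → ℝ)
    (hAmeas : ∀ i, Measurable (A i)) (hBmeas : Measurable B)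
    (hAbin : ∀ i ω, A i ω = -1 ∨ A i ω = 1)
    (hBbin : ∀ ω, B ω = -1 ∨ B ω = 1)
    (hnondeg : ∀ v : Fin p → ℝ, (∀ i, v i = -1 ∨ v i = 1) →
      0 < μ {ω | ∀ i, A i ω = v i})
    (β : Finset (Fin p) → ℝ)
    (hβ : μ[B | ⨆ i, MeasurableSpace.comap (A i) inferInstance]
      =ᵐ[μ] fun ω => ∑ S : Finset (Fin p), β S * ∏ i ∈ S, A i ω)
    (GA : Set (Ω → ℝ))
    (hGA : GA = {g | ∃ T : Finset (Fin p), g = fun ω => ∏ i ∈ T, A i ω})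
    (S : Set (Ω → ℝ)) (hS : S ⊆ GA)
    (hci : CondIndepSigma μ (sigmaGen S) (MeasurableSpace.comap B inferInstance)
      (sigmaGen GA)) :
    ∀ T : Finset (Fin p),
      (fun ω => ∏ i ∈ T, A i ω) ∉ Submonoid.closure S → β T = 0 := by
  classical
  intro Λ hΛ
  -- basic measurability of products
  have hprod_meas : ∀ T : Finset (Fin p), Measurable (fun ω => ∏ i ∈ T, A i ω) :=
    fun T => Finset.measurable_prod T (fun i _ => hAmeas i)
  -- mG ≤ m0
  have hG0 : sigmaGen GA ≤ ‹MeasurableSpace Ω› := by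
    refine iSup₂_le fun g hg => ?_
    rw [hGA] at hg
    obtain ⟨T, rfl⟩ := hg
    exact measurable_iff_comap_le.mp (hprod_meas T)
  -- mA = mG
  have hprod_measA : ∀ T : Finset (Fin p),
      Measurable[⨆ i, MeasurableSpace.comap (A i) inferInstance]
        (fun ω => ∏ i ∈ T, A i ω) := by
    intro T
    refine Finset.measurable_prod T (fun i _ => ?_)
    exact measurable_iff_comap_le.mpr (le_iSup (fun i => MeasurableSpace.comap (A i)
      inferInstance) i)
  have hAG : (⨆ i, MeasurableSpace.comap (A i) inferInstance) = sigmaGen GA := by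
    apply le_antisymm
    · refine iSup_le fun i => ?_
      have hmem : A i ∈ GA := by
        rw [hGA]
        refine ⟨{i}, ?_⟩
        funext ω
        rw [Finset.prod_singleton]
      exact le_iSup₂ (f := fun (g : Ω → ℝ) (_ : g ∈ GA) =>
        MeasurableSpace.comap g inferInstance) (A i) hmem
    · refine iSup₂_le fun g hg => ?_
      rw [hGA] at hg
      obtain ⟨T, rfl⟩ := hg
      exact measurable_iff_comap_le.mp (hprod_measA T)
  have hSG : sigmaGen S ≤ sigmaGen GA := by
    refine iSup₂_le fun g hg => ?_
    exact le_iSup₂ (f := fun (g : Ω → ℝ) (_ : g ∈ GA) =>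
      MeasurableSpace.comap g inferInstance) g (hS hg)
  -- conditional expectation identification
  have hcond : μ[B | sigmaGen S] =ᵐ[μ] μ[B | sigmaGen GA] :=
    condexp_eq_of_ci μ hSG hG0 B hBmeas hBbin (fun s t hs ht => hci s t hs ht)
  set fβ : Ω → ℝ := fun ω => ∑ T : Finset (Fin p), β T * ∏ i ∈ T, A i ω with hfβ
  have hβ' : μ[B | sigmaGen GA] =ᵐ[μ] fβ := by rw [← hAG]; exact hβ
  set g : Ω → ℝ := μ[B | sigmaGen S] with hg_def
  have hfg : fβ =ᵐ[μ] g := (hβ'.symm.trans hcond.symm)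
  -- pick points in each atom where fβ = g
  have hbad : μ {ω | ¬ fβ ω = g ω} = 0 := by
    rw [← MeasureTheory.ae_iff]
    exact hfg
  have hpick : ∀ x : Fin p → ZMod 2, ∃ ω, (∀ i, A i ω = sgn2 (x i)) ∧ fβ ω = g ω := by
    intro x
    have hx : ∀ i, sgn2 (x i) = -1 ∨ sgn2 (x i) = 1 := by
      intro i
      rcases zmod2_cases (x i) with h | h <;> rw [h]
      · right; exact sgn2_zero
      · left; exact sgn2_one
    have hpos := hnondeg (fun i => sgn2 (x i)) hx
    by_contra hcon
    push_neg at hcon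
    have hsub : {ω | ∀ i, A i ω = sgn2 (x i)} ⊆ {ω | ¬ fβ ω = g ω} := by
      intro ω hω
      exact hcon ω hω
    have := measure_mono (μ := μ) hsub
    rw [hbad] at this
    exact absurd (le_antisymm this zero_le) (ne_of_gt hpos)
  choose ω hω1 hω2 using hpick
  -- the subgroup M
  set M : Set (Finset (Fin p)) :=
    {T | (fun ω => ∏ i ∈ T, A i ω) ∈ Submonoid.closure S} with hM
  have hM0 : ∅ ∈ M := by
    show (fun ω => ∏ i ∈ (∅ : Finset (Fin p)), A i ω) ∈ Submonoid.closure S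
    have : (fun ω => ∏ i ∈ (∅ : Finset (Fin p)), A i ω) = (1 : Ω → ℝ) := by
      funext ω; simp
    rw [this]
    exact one_mem _
  have hMadd : ∀ T ∈ M, ∀ T' ∈ M, symmDiff T T' ∈ M := by
    intro T hT T' hT'
    show (fun ω => ∏ i ∈ symmDiff T T', A i ω) ∈ Submonoid.closure S
    have heq : (fun ω => ∏ i ∈ symmDiff T T', A i ω)
        = (fun ω => ∏ i ∈ T, A i ω) * (fun ω => ∏ i ∈ T', A i ω) := by
      funext ω
      show ∏ i ∈ symmDiff T T', A i ω = (∏ i ∈ T, A i ω) * ∏ i ∈ T', A i ω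
      rw [prod_symmDiff_of_sq_one T T' (fun i => A i ω)
        (fun i => by
          show A i ω * A i ω = 1
          rcases hAbin i ω with h | h <;> rw [h] <;> norm_num)]
    rw [heq]
    exact mul_mem hT hT'
  have hΛM : Λ ∉ M := hΛ
  obtain ⟨b, hb1, hb2⟩ := exists_perp M hM0 hMadd Λ hΛM
  -- value function on the cube
  set v : (Fin p → ZMod 2) → ℝ := fun x => ∑ T : Finset (Fin p), β T * chi T x with hv
  have hval : ∀ x, v x = g (ω x) := by
    intro x
    rw [← hω2 x, hfβ]
    show ∑ T : Finset (Fin p), β T * chi T x = ∑ T : Finset (Fin p), β T * ∏ i ∈ T, A i (ω x)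
    refine Finset.sum_congr rfl fun T _ => ?_
    congr 1
    rw [chi]
    exact (Finset.prod_congr rfl fun i _ => (hω1 x i)).symm
  -- invariance under translation by b
  have hinv : ∀ x, v (b + x) = v x := by
    intro x
    rw [hval, hval]
    refine (sigmaGen_invariant S g stronglyMeasurable_condExp ?_).symm
    intro f hf
    have hfGA := hS hf
    rw [hGA] at hfGA
    obtain ⟨T, rfl⟩ := hfGA
    have hTM : T ∈ M := by
      show (fun ω => ∏ i ∈ T, A i ω) ∈ Submonoid.closure S
      exact Submonoid.subset_closure hf
    have hchiT : ∀ y : Fin p → ZMod 2, ∏ i ∈ T, A i (ω y) = chi T y := by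
      intro y
      rw [chi]
      exact Finset.prod_congr rfl fun i _ => (hω1 y i)
    show ∏ i ∈ T, A i (ω x) = ∏ i ∈ T, A i (ω (b + x))
    rw [hchiT, hchiT, chi_add, chi_eq_sgn2_sum T b, hb1 T hTM, sgn2_zero, one_mul]
  -- character sum argument
  have hchiΛb : chi Λ b = -1 := by
    rw [chi_eq_sgn2_sum, hb2, sgn2_one]
  have hsum : ∑ x : Fin p → ZMod 2, v x * chi Λ x = 2^p * β Λ := sum_expansion β Λ
  have hsum0 : ∑ x : Fin p → ZMod 2, v x * chi Λ x = 0 := by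
    have hre : ∑ x : Fin p → ZMod 2, v x * chi Λ x
        = ∑ x : Fin p → ZMod 2, v (b + x) * chi Λ (b + x) :=
      (Fintype.sum_equiv (Equiv.addLeft b) _ _ (fun x => rfl)).symm
    have : ∑ x : Fin p → ZMod 2, v (b + x) * chi Λ (b + x)
        = - ∑ x : Fin p → ZMod 2, v x * chi Λ x := by
      rw [← Finset.sum_neg_distrib]
      refine Finset.sum_congr rfl fun x _ => ?_
      rw [hinv x, chi_add, hchiΛb, neg_one_mul]
      ring
    linarith [hre, this]
  rw [hsum0] at hsum
  have h2p : (2 : ℝ)^p ≠ 0 := pow_ne_zero p (by norm_num)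
  have := mul_eq_zero.mp hsum.symm
  rcases this with h | h
  · exact absurd h h2p
  · exact h
end

section
/- Let B_1, …, B_n ∈ {-1, 1} and A_1, …, A_n ∈ {-1, 1}^p, and suppose 𝒜ᵀ𝒜 is invertible. Then the least squares estimator β̂ = (𝒜ᵀ𝒜)^{-1} 𝒜ᵀ ℬ satisfies (1) ‖H_{2^p} β̂‖_∞ ≤ 1, (2) ‖𝒜 β̂‖_∞ ≤ 1, and (3) ‖β̂‖_2 ≤ 1. -/
open Finset


/-- The Sylvester Hadamard matrix of size `2^p`, indexed by subsets of `{1, …, p}`. -/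
noncomputable def Had (p : ℕ) : Matrix (Finset (Fin p)) (Finset (Fin p)) ℝ :=
  Matrix.of fun S T => (-1 : ℝ) ^ (S ∩ T).card

lemma had_apply (p : ℕ) (S T : Finset (Fin p)) : Had p S T = (-1:ℝ) ^ (S ∩ T).card := rfl

lemma had_symm (p : ℕ) (S T : Finset (Fin p)) : Had p S T = Had p T S := by
  simp [had_apply, Finset.inter_comm]

lemma neg_one_pow_inter (p : ℕ) (T S : Finset (Fin p)) :
    ((-1 : ℝ) ^ (T ∩ S).card) = ∏ j ∈ S, (if j ∈ T then (-1:ℝ) else 1) := by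
  classical
  rw [Finset.prod_ite, Finset.prod_const, Finset.prod_const, one_pow, mul_one]
  rw [Finset.inter_comm, ← Finset.filter_mem_eq_inter]

lemma had_ortho (p : ℕ) (T U : Finset (Fin p)) :
    ∑ S : Finset (Fin p), Had p T S * Had p U S = if T = U then (2:ℝ)^p else 0 := by
  classical
  have h1 : ∀ S : Finset (Fin p), Had p T S * Had p U S
      = ∏ j ∈ S, ((if j ∈ T then (-1:ℝ) else 1) * (if j ∈ U then (-1:ℝ) else 1)) := by
    intro S
    rw [Finset.prod_mul_distrib, had_apply, had_apply, neg_one_pow_inter, neg_one_pow_inter]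
  simp_rw [h1]
  have h2 : ∑ S : Finset (Fin p), ∏ j ∈ S,
      ((if j ∈ T then (-1:ℝ) else 1) * (if j ∈ U then (-1:ℝ) else 1))
      = ∏ j : Fin p, (((if j ∈ T then (-1:ℝ) else 1) * (if j ∈ U then (-1:ℝ) else 1)) + 1) := by
    rw [Finset.prod_add]
    simp [Finset.powerset_univ]
  rw [h2]
  by_cases hTU : T = U
  · subst hTU
    rw [if_pos rfl]
    have h3 : ∀ j : Fin p, ((if j ∈ T then (-1:ℝ) else 1) * (if j ∈ T then (-1:ℝ) else 1)) + 1 = 2 := by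
      intro j; by_cases h : j ∈ T <;> simp [h] <;> norm_num
    rw [Finset.prod_congr rfl (fun j _ => h3 j), Finset.prod_const]
    simp
  · rw [if_neg hTU]
    obtain ⟨j, hj⟩ : ∃ j, ¬ (j ∈ T ↔ j ∈ U) := by
      by_contra h
      push_neg at h
      exact hTU (Finset.ext fun j => h j)
    apply Finset.prod_eq_zero (Finset.mem_univ j)
    rcases Classical.em (j ∈ T) with h | h <;> rcases Classical.em (j ∈ U) with h' | h' <;>
      simp [h, h'] at hj ⊢ <;> norm_num

/-- **Bounds on the least squares BELIEF estimator** (Theorem 7).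
Let `B_1, …, B_n ∈ {-1,1}` and `A_1, …, A_n ∈ {-1,1}^p`, let `𝒜` be the `n × 2^p` design
matrix whose `i`-th row is the power vector `A_i^⊗`, and suppose `𝒜ᵀ𝒜` is invertible.
Then the least squares estimator `β̂ = (𝒜ᵀ𝒜)⁻¹ 𝒜ᵀ ℬ` satisfies
(1) `‖H_{2^p} β̂‖_∞ ≤ 1`, (2) `‖𝒜 β̂‖_∞ ≤ 1`, and (3) `‖β̂‖₂ ≤ 1`. -/
theorem lse_belief_bounds
    {n p : ℕ} (Bv : Fin n → ℝ) (Av : Fin n → Fin p → ℝ)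
    (hB : ∀ i, Bv i = -1 ∨ Bv i = 1)
    (hA : ∀ i j, Av i j = -1 ∨ Av i j = 1) :
    letI 𝒜 : Matrix (Fin n) (Finset (Fin p)) ℝ :=
      Matrix.of fun i S => ∏ j ∈ S, Av i j
    ∀ _ : IsUnit (𝒜.transpose * 𝒜),
      letI βhat : Finset (Fin p) → ℝ :=
        ((𝒜.transpose * 𝒜)⁻¹ * 𝒜.transpose).mulVec Bv
      (∀ S : Finset (Fin p), |(Had p).mulVec βhat S| ≤ 1) ∧
      (∀ i : Fin n, |𝒜.mulVec βhat i| ≤ 1) ∧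
      (∑ S : Finset (Fin p), βhat S ^ 2 ≤ 1) := by
  classical
  intro hU
  set 𝒜 : Matrix (Fin n) (Finset (Fin p)) ℝ :=
    Matrix.of (fun i S => ∏ j ∈ S, Av i j) with h𝒜
  set βh : Finset (Fin p) → ℝ :=
    ((𝒜.transpose * 𝒜)⁻¹ * 𝒜.transpose).mulVec Bv with hβ
  set t : Fin n → Finset (Fin p) :=
    fun i => Finset.univ.filter (fun j => Av i j = -1) with ht
  have hArow : ∀ i S, 𝒜 i S = Had p (t i) S := by
    intro i S
    show (∏ j ∈ S, Av i j) = (-1:ℝ) ^ ((t i) ∩ S).card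
    rw [neg_one_pow_inter]
    refine Finset.prod_congr rfl fun j hj => ?_
    rcases hA i j with h | h
    · simp [ht, h]
    · have : j ∉ t i := by
        simp only [ht, Finset.mem_filter, Finset.mem_univ, true_and, h]
        norm_num
      simp [this, h]
  have hdet : IsUnit (𝒜.transpose * 𝒜).det := (Matrix.isUnit_iff_isUnit_det _).mp hU
  have hGinv : (𝒜.transpose * 𝒜) * (𝒜.transpose * 𝒜)⁻¹ = 1 := Matrix.mul_nonsing_inv _ hdet
  have hinvG : (𝒜.transpose * 𝒜)⁻¹ * (𝒜.transpose * 𝒜) = 1 := Matrix.nonsing_inv_mul _ hdet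
  have hnormal : (𝒜.transpose * 𝒜).mulVec βh = 𝒜.transpose.mulVec Bv := by
    rw [hβ, Matrix.mulVec_mulVec, ← Matrix.mul_assoc, hGinv, Matrix.one_mul]
  set γ : Finset (Fin p) → ℝ := (Had p).mulVec βh with hγ
  have hγap : ∀ T, γ T = ∑ S, Had p T S * βh S := fun T => rfl
  have hEq : ∀ S, ∑ i, Had p (t i) S * (γ (t i) - Bv i) = 0 := by
    intro S
    have hL : (𝒜.transpose * 𝒜).mulVec βh S = ∑ i, Had p (t i) S * γ (t i) := by
      simp only [Matrix.mulVec, dotProduct, Matrix.mul_apply, Matrix.transpose_apply]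
      simp_rw [Finset.sum_mul]
      rw [Finset.sum_comm]
      refine Finset.sum_congr rfl fun i _ => ?_
      rw [hγap, Finset.mul_sum]
      refine Finset.sum_congr rfl fun S' _ => ?_
      rw [hArow, hArow]
      ring
    have hR : (𝒜.transpose.mulVec Bv) S = ∑ i, Had p (t i) S * Bv i := by
      simp only [Matrix.mulVec, dotProduct, Matrix.transpose_apply]
      exact Finset.sum_congr rfl fun i _ => by rw [hArow]
    have hns := congrFun hnormal S
    rw [hL, hR] at hns
    simp only [mul_sub, Finset.sum_sub_distrib, hns, sub_self]
  have hwz : ∀ T, ∑ i ∈ Finset.univ.filter (fun i => t i = T), (γ T - Bv i) = 0 := by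
    have hHw : ∀ S, ∑ T, Had p T S *
        (∑ i ∈ Finset.univ.filter (fun i => t i = T), (γ T - Bv i)) = 0 := by
      intro S
      have h3 : ∀ T, Had p T S * (∑ i ∈ Finset.univ.filter (fun i => t i = T), (γ T - Bv i))
          = ∑ i ∈ Finset.univ.filter (fun i => t i = T), Had p (t i) S * (γ (t i) - Bv i) := by
        intro T
        rw [Finset.mul_sum]
        exact Finset.sum_congr rfl fun i hi => by rw [(Finset.mem_filter.mp hi).2]
      simp_rw [h3]
      rw [Finset.sum_fiberwise]
      exact hEq S
    intro T0
    have h1 : ∑ S, Had p T0 S * (∑ T, Had p T S *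
        (∑ i ∈ Finset.univ.filter (fun i => t i = T), (γ T - Bv i))) = 0 :=
      Finset.sum_eq_zero fun S _ => by rw [hHw S, mul_zero]
    have h2 : ∑ S, Had p T0 S * (∑ T, Had p T S *
          (∑ i ∈ Finset.univ.filter (fun i => t i = T), (γ T - Bv i)))
        = (2:ℝ)^p * ∑ i ∈ Finset.univ.filter (fun i => t i = T0), (γ T0 - Bv i) := by
      calc ∑ S, Had p T0 S * (∑ T, Had p T S *
            (∑ i ∈ Finset.univ.filter (fun i => t i = T), (γ T - Bv i)))
          = ∑ S, ∑ T, (Had p T0 S * Had p T S) *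
            (∑ i ∈ Finset.univ.filter (fun i => t i = T), (γ T - Bv i)) := by
            refine Finset.sum_congr rfl fun S _ => ?_
            rw [Finset.mul_sum]
            exact Finset.sum_congr rfl fun T _ => by ring
        _ = ∑ T, (∑ S, Had p T0 S * Had p T S) *
            (∑ i ∈ Finset.univ.filter (fun i => t i = T), (γ T - Bv i)) := by
            rw [Finset.sum_comm]
            exact Finset.sum_congr rfl fun T _ => (Finset.sum_mul _ _ _).symm
        _ = ∑ T, (if T0 = T then (2:ℝ)^p else 0) *
            (∑ i ∈ Finset.univ.filter (fun i => t i = T), (γ T - Bv i)) := by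
            refine Finset.sum_congr rfl fun T _ => ?_
            rw [had_ortho]
        _ = (2:ℝ)^p * ∑ i ∈ Finset.univ.filter (fun i => t i = T0), (γ T0 - Bv i) := by
            simp only [ite_mul, zero_mul]
            rw [Finset.sum_ite_eq]
            simp
    rw [h2] at h1
    have h2p : (2:ℝ)^p ≠ 0 := by positivity
    exact (mul_eq_zero.mp h1).resolve_left h2p
  have hfib : ∀ T, (Finset.univ.filter (fun i => t i = T)).Nonempty := by
    intro T0
    by_contra hne
    rw [Finset.not_nonempty_iff_eq_empty, Finset.filter_eq_empty_iff] at hne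
    have hv : 𝒜.mulVec (fun S => Had p T0 S) = 0 := by
      funext i
      have h5 : ∑ S, Had p (t i) S * Had p T0 S = 0 := by
        rw [had_ortho, if_neg (fun h => hne (Finset.mem_univ i) h)]
      simpa [Matrix.mulVec, dotProduct, hArow] using h5
    have hGv : (𝒜.transpose * 𝒜).mulVec (fun S => Had p T0 S) = 0 := by
      rw [← Matrix.mulVec_mulVec, hv, Matrix.mulVec_zero]
    have hv0 : (fun S => Had p T0 S) = (0 : Finset (Fin p) → ℝ) := by
      calc (fun S => Had p T0 S)
          = ((𝒜.transpose * 𝒜)⁻¹ * (𝒜.transpose * 𝒜)).mulVec (fun S => Had p T0 S) := by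
            rw [hinvG, Matrix.one_mulVec]
        _ = ((𝒜.transpose * 𝒜)⁻¹).mulVec ((𝒜.transpose * 𝒜).mulVec (fun S => Had p T0 S)) := by
            rw [Matrix.mulVec_mulVec]
        _ = 0 := by rw [hGv, Matrix.mulVec_zero]
    have := congrFun hv0 ∅
    simp [had_apply] at this
  have hγle : ∀ T, |γ T| ≤ 1 := by
    intro T
    have hcard : (0:ℝ) < ((Finset.univ.filter (fun i => t i = T)).card : ℝ) := by
      exact_mod_cast Finset.card_pos.mpr (hfib T)
    have heq : ((Finset.univ.filter (fun i => t i = T)).card : ℝ) * γ T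
        = ∑ i ∈ Finset.univ.filter (fun i => t i = T), Bv i := by
      have h6 := hwz T
      rw [Finset.sum_sub_distrib, sub_eq_zero] at h6
      simpa [Finset.sum_const, nsmul_eq_mul] using h6
    have habs : |∑ i ∈ Finset.univ.filter (fun i => t i = T), Bv i|
        ≤ ((Finset.univ.filter (fun i => t i = T)).card : ℝ) := by
      calc |∑ i ∈ Finset.univ.filter (fun i => t i = T), Bv i|
          ≤ ∑ i ∈ Finset.univ.filter (fun i => t i = T), |Bv i| :=
            Finset.abs_sum_le_sum_abs _ _
        _ = ∑ i ∈ Finset.univ.filter (fun i => t i = T), (1:ℝ) := by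
            refine Finset.sum_congr rfl fun i _ => ?_
            rcases hB i with h | h <;> simp [h]
        _ = _ := by simp
    rw [← mul_le_mul_iff_right₀ hcard, mul_one, ← abs_of_pos hcard, ← abs_mul, heq,
      abs_of_pos hcard]
    exact habs
  refine ⟨fun S => hγle S, fun i => ?_, ?_⟩
  · have h7 : 𝒜.mulVec βh i = γ (t i) := by
      simp only [Matrix.mulVec, dotProduct]
      rw [hγap]
      exact Finset.sum_congr rfl fun S _ => by rw [hArow]
    rw [h7]
    exact hγle _
  · have hsq : ∑ T, γ T ^ 2 = (2:ℝ)^p * ∑ S, βh S ^ 2 := by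
      have e1 : ∀ T, γ T ^ 2 = ∑ S, ∑ S', (βh S * βh S') * (Had p T S * Had p T S') := by
        intro T
        rw [hγap T, pow_two, Finset.sum_mul_sum]
        exact Finset.sum_congr rfl fun S _ => Finset.sum_congr rfl fun S' _ => by ring
      simp_rw [e1]
      calc ∑ T : Finset (Fin p), ∑ S, ∑ S', (βh S * βh S') * (Had p T S * Had p T S')
          = ∑ S, ∑ S', (βh S * βh S') * ∑ T, Had p T S * Had p T S' := by
            rw [Finset.sum_comm]
            refine Finset.sum_congr rfl fun S _ => ?_
            rw [Finset.sum_comm]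
            refine Finset.sum_congr rfl fun S' _ => ?_
            rw [Finset.mul_sum]
        _ = ∑ S, ∑ S', (βh S * βh S') * (if S = S' then (2:ℝ)^p else 0) := by
            refine Finset.sum_congr rfl fun S _ => Finset.sum_congr rfl fun S' _ => ?_
            congr 1
            rw [← had_ortho p S S']
            exact Finset.sum_congr rfl fun T _ => by rw [had_symm p T S, had_symm p T S']
        _ = ∑ S, βh S ^ 2 * (2:ℝ)^p := by
            refine Finset.sum_congr rfl fun S _ => ?_
            simp [mul_ite, Finset.sum_ite_eq, pow_two]
        _ = (2:ℝ)^p * ∑ S, βh S ^ 2 := by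
            rw [Finset.mul_sum]
            exact Finset.sum_congr rfl fun S _ => by ring
    have hbound : ∑ T, γ T ^ 2 ≤ (2:ℝ)^p := by
      calc ∑ T, γ T ^ 2 ≤ ∑ _T : Finset (Fin p), (1:ℝ) := by
            refine Finset.sum_le_sum fun T _ => ?_
            have h8 := abs_le.mp (hγle T)
            nlinarith [h8.1, h8.2]
        _ = (2:ℝ)^p := by
            simp [Finset.card_univ, Fintype.card_finset]
    have h2p : (0:ℝ) < (2:ℝ)^p := by positivity
    rw [hsq] at hbound
    nlinarith
end

section
/- Let p ≥ 2, and let g : (-1, 1) → ℝ be continuous and strictly increasing, with inverse g^{-1} defined on the range of g. For each γ ∈ ℝ^{2^p} such that every entry of H_{2^p} γ lies in the range of g, define β_γ = H_{2^p}^{-1} g^{-1}(H_{2^p} γ) (g^{-1} applied componentwise), so that β_γᵀ a^⊗ = g^{-1}(γᵀ a^⊗) for all a ∈ {-1, 1}^p. Let γ_{12} and β_{γ,12} denote the coordinates of γ and β_γ indexed by the subset {1, 2} (the A_1 A_2 interaction). If for every such γ one has γ_{12} = 0 if and only if β_{γ,12} = 0, then g is a linear function: there exist a, b ∈ ℝ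 with g(x) = a x + b for all x ∈ (-1, 1). -/
private lemma sum_flip_zero {p : ℕ} (i : Fin p) (f : Finset (Fin p) → ℝ)
    (hf : ∀ T, f (symmDiff T {i}) = - f T) : ∑ T : Finset (Fin p), f T = 0 := by
  have h1 : ∑ T : Finset (Fin p), f (symmDiff T {i}) = ∑ T : Finset (Fin p), f T :=
    Equiv.sum_comp ⟨fun T => symmDiff T {i}, fun T => symmDiff T {i},
      fun T => symmDiff_symmDiff_cancel_right _ _, fun T => symmDiff_symmDiff_cancel_right _ _⟩ f
  have h2 : (∑ T : Finset (Fin p), f T) + (∑ T : Finset (Fin p), f T) = 0 := by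
    nth_rewrite 1 [← h1]
    rw [← Finset.sum_add_distrib]
    have h3 : ∀ T : Finset (Fin p), f (symmDiff T {i}) + f T = 0 := fun T => by rw [hf]; ring
    simp [h3]
  linarith

private lemma mem_flip_self {p : ℕ} (i : Fin p) (T : Finset (Fin p)) :
    i ∈ symmDiff T {i} ↔ i ∉ T := by rw [Finset.mem_symmDiff]; simp

private lemma mem_flip_other {p : ℕ} {i j : Fin p} (h : j ≠ i) (T : Finset (Fin p)) :
    j ∈ symmDiff T {i} ↔ j ∈ T := by rw [Finset.mem_symmDiff]; simp [h]

private lemma chi_sum {p : ℕ} (i : Fin p) :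
    ∑ T : Finset (Fin p), (if i ∈ T then (-1:ℝ) else 1) = 0 := by
  apply sum_flip_zero i
  intro T
  by_cases h : i ∈ T <;> simp [mem_flip_self, h]

private lemma chi2_sum {p : ℕ} {i j : Fin p} (hne : i ≠ j) :
    ∑ T : Finset (Fin p),
      ((if i ∈ T then (-1:ℝ) else 1) * (if j ∈ T then (-1:ℝ) else 1)) = 0 := by
  apply sum_flip_zero i
  intro T
  by_cases h : i ∈ T <;> by_cases h' : j ∈ T <;>
    simp [mem_flip_self, mem_flip_other hne.symm, h, h'] <;> ring

private lemma sign_single {p : ℕ} (i : Fin p) (S : Finset (Fin p)) :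
    (-1 : ℝ) ^ (S ∩ ({i} : Finset (Fin p))).card = (if i ∈ S then -1 else 1) := by
  by_cases h : i ∈ S
  · rw [Finset.inter_singleton_of_mem h]; simp [h]
  · rw [Finset.inter_singleton_of_notMem h]; simp [h]

private lemma sign_pair {p : ℕ} {i j : Fin p} (hne : i ≠ j) (S : Finset (Fin p)) :
    (-1 : ℝ) ^ (S ∩ ({i, j} : Finset (Fin p))).card
      = (if i ∈ S then -1 else 1) * (if j ∈ S then -1 else 1) := by
  have hd : Disjoint (S ∩ ({i} : Finset (Fin p))) (S ∩ {j}) := by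
    apply Finset.disjoint_left.2
    intro x hx hx'
    simp only [Finset.mem_inter, Finset.mem_singleton] at hx hx'
    exact hne (hx.2 ▸ hx'.2 ▸ rfl)
  have h1 : ({i, j} : Finset (Fin p)) = {i} ∪ {j} := rfl
  rw [h1, Finset.inter_union_distrib_left, Finset.card_union_of_disjoint hd, pow_add,
    sign_single, sign_single]

private lemma sum_sign_pattern {p : ℕ} {i j : Fin p} (hne : i ≠ j) (a b c d : ℝ) :
    ∑ T : Finset (Fin p),
      (-1 : ℝ) ^ ((({i, j} : Finset (Fin p)) ∩ T).card) *
        (if i ∈ T then (if j ∈ T then d else b) else if j ∈ T then c else a)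
      = 2 ^ p * ((a - b - c + d) / 4) := by
  have key : ∀ T : Finset (Fin p),
      (-1 : ℝ) ^ ((({i, j} : Finset (Fin p)) ∩ T).card) *
        (if i ∈ T then (if j ∈ T then d else b) else if j ∈ T then c else a)
      = ((a - b - c + d)/4)
        + ((a - b + c - d)/4) * (if j ∈ T then (-1:ℝ) else 1)
        + ((a + b - c - d)/4) * (if i ∈ T then (-1:ℝ) else 1)
        + ((a + b + c + d)/4) *
            ((if i ∈ T then (-1:ℝ) else 1) * (if j ∈ T then (-1:ℝ) else 1)) := by
    intro T
    rw [Finset.inter_comm, sign_pair hne]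
    by_cases hi : i ∈ T <;> by_cases hj : j ∈ T <;> simp [hi, hj] <;> ring
  rw [Finset.sum_congr rfl (fun T _ => key T)]
  simp only [Finset.sum_add_distrib, ← Finset.mul_sum]
  rw [chi_sum j, chi_sum i, chi2_sum hne, Finset.sum_const, Finset.card_univ]
  simp [Fintype.card_finset]

private lemma mulVec_gamma {p : ℕ} {i j : Fin p} (hne : i ≠ j) (e0 e1 e2 e3 : ℝ)
    (S : Finset (Fin p)) :
    (Had p).mulVec (fun T => (if T = (∅ : Finset (Fin p)) then e0 else 0)
        + (if T = {i} then e1 else 0) + (if T = {j} then e2 else 0)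
        + (if T = {i, j} then e3 else 0)) S
      = e0 + (if i ∈ S then (-1:ℝ) else 1) * e1 + (if j ∈ S then (-1:ℝ) else 1) * e2
        + ((if i ∈ S then (-1:ℝ) else 1) * (if j ∈ S then (-1:ℝ) else 1)) * e3 := by
  simp only [Matrix.mulVec, dotProduct, Had, Matrix.of_apply, mul_add, mul_ite, mul_zero,
    Finset.sum_add_distrib, Finset.sum_ite_eq', Finset.mem_univ, if_true]
  rw [Finset.inter_empty, sign_single, sign_single, sign_pair hne]
  simp

/-- **Equivalence of interaction coefficients forces a linear link** (Theorem 10).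
Let `p ≥ 2` and let `g : (-1,1) → ℝ` be continuous and strictly increasing, with inverse
`g⁻¹` defined on the range of `g`.  For each `γ ∈ ℝ^{2^p}` such that every entry of
`H_{2^p} γ` lies in the range of `g`, define `β_γ = H_{2^p}⁻¹ g⁻¹(H_{2^p} γ)`
(componentwise, and `H_{2^p}⁻¹ = 2^{-p} H_{2^p}`), so that `β_γᵀ a^⊗ = g⁻¹(γᵀ a^⊗)` for
all `a ∈ {-1,1}^p`.  If for every such `γ` the coordinate of `γ` indexed by `{1,2}` (the
`A₁A₂` interaction) vanishes exactly when the corresponding coordinate of `β_γ` does, then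
`g` is linear: there exist `a, b ∈ ℝ` with `g(x) = a x + b` on `(-1,1)`. -/
theorem interaction_equivalence_implies_linear_link
    {p : ℕ} (hp : 2 ≤ p) (g ginv : ℝ → ℝ)
    (hmono : StrictMonoOn g (Set.Ioo (-1 : ℝ) 1))
    (hcont : ContinuousOn g (Set.Ioo (-1 : ℝ) 1))
    (hginv : Set.InvOn ginv g (Set.Ioo (-1 : ℝ) 1) (g '' Set.Ioo (-1 : ℝ) 1))
    (hiff : ∀ γ : Finset (Fin p) → ℝ,
      (∀ S : Finset (Fin p), (Had p).mulVec γ S ∈ g '' Set.Ioo (-1 : ℝ) 1) →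
      (γ ({⟨0, by omega⟩, ⟨1, by omega⟩} : Finset (Fin p)) = 0 ↔
        ((2 : ℝ) ^ p)⁻¹ *
          (Had p).mulVec (fun T => ginv ((Had p).mulVec γ T))
            ({⟨0, by omega⟩, ⟨1, by omega⟩} : Finset (Fin p)) = 0)) :
    ∃ a b : ℝ, ∀ x ∈ Set.Ioo (-1 : ℝ) 1, g x = a * x + b := by
  set D : Set ℝ := Set.Ioo (-1 : ℝ) 1 with hD
  have h0p : 0 < p := by omega
  have h1p : 1 < p := by omega
  set i0 : Fin p := ⟨0, by omega⟩ with hi0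
  set i1 : Fin p := ⟨1, by omega⟩ with hi1
  have hne : i0 ≠ i1 := by
    intro h
    have := congrArg Fin.val h
    simp [hi0, hi1] at this
  -- Step 1: the four-point Jensen equation for g
  have J4 : ∀ x1 x2 x3 x4 : ℝ, x1 ∈ D → x2 ∈ D → x3 ∈ D → x4 ∈ D →
      x1 + x2 = x3 + x4 → g x1 + g x2 = g x3 + g x4 := by
    intro x1 x2 x3 x4 h1 h2 h3 h4 hsum
    set u := g x1 with hu
    set v := g x3 with hv
    set w := g x4 with hw
    set z := g x2 with hz
    set γ : Finset (Fin p) → ℝ := fun T =>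
      (if T = (∅ : Finset (Fin p)) then (u+v+w+z)/4 else 0)
        + (if T = {i0} then (u-v+w-z)/4 else 0) + (if T = {i1} then (u+v-w-z)/4 else 0)
        + (if T = {i0, i1} then (u-v-w+z)/4 else 0) with hγ
    have hA : ∀ S : Finset (Fin p), (Had p).mulVec γ S
        = (if i0 ∈ S then (if i1 ∈ S then z else v) else if i1 ∈ S then w else u) := by
      intro S
      rw [hγ, mulVec_gamma hne]
      by_cases hi : i0 ∈ S <;> by_cases hj : i1 ∈ S <;> simp [hi, hj] <;> ring
    have hall : ∀ S : Finset (Fin p), (Had p).mulVec γ S ∈ g '' D := by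
      intro S
      rw [hA]
      split_ifs
      · exact Set.mem_image_of_mem g h2
      · exact Set.mem_image_of_mem g h3
      · exact Set.mem_image_of_mem g h4
      · exact Set.mem_image_of_mem g h1
    have hβ : (Had p).mulVec (fun T => ginv ((Had p).mulVec γ T)) ({i0, i1} : Finset (Fin p))
        = 2 ^ p * ((x1 - x3 - x4 + x2) / 4) := by
      have hg' : ∀ T : Finset (Fin p), ginv ((Had p).mulVec γ T)
          = (if i0 ∈ T then (if i1 ∈ T then x2 else x3) else if i1 ∈ T then x4 else x1) := by
        intro T
        rw [hA]
        split_ifs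
        · exact hginv.1 h2
        · exact hginv.1 h3
        · exact hginv.1 h4
        · exact hginv.1 h1
      have hfun : (fun T => ginv ((Had p).mulVec γ T))
          = fun T : Finset (Fin p) =>
            (if i0 ∈ T then (if i1 ∈ T then x2 else x3) else if i1 ∈ T then x4 else x1) :=
        funext hg'
      rw [hfun]
      simp only [Matrix.mulVec, dotProduct, Had, Matrix.of_apply]
      exact sum_sign_pattern hne x1 x3 x4 x2
    have hs01 : ({⟨0, by omega⟩, ⟨1, by omega⟩} : Finset (Fin p)) = ({i0, i1} : Finset (Fin p)) := rfl
    have hiffγ := hiff γ hall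
    rw [hs01] at hiffγ
    have hb0 : ((2:ℝ) ^ p)⁻¹ *
        (Had p).mulVec (fun T => ginv ((Had p).mulVec γ T)) ({i0, i1} : Finset (Fin p)) = 0 := by
      rw [hβ]
      have : x1 - x3 - x4 + x2 = 0 := by linarith
      rw [this]
      ring
    have hγ0 : γ ({i0, i1} : Finset (Fin p)) = 0 := hiffγ.mpr hb0
    have hne1 : ({i0, i1} : Finset (Fin p)) ≠ (∅ : Finset (Fin p)) := by
      simp
    have hne2 : ({i0, i1} : Finset (Fin p)) ≠ ({i0} : Finset (Fin p)) := by
      intro h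
      have : i1 ∈ ({i0} : Finset (Fin p)) := h ▸ (by simp)
      simp at this
      exact hne this.symm
    have hne3 : ({i0, i1} : Finset (Fin p)) ≠ ({i1} : Finset (Fin p)) := by
      intro h
      have : i0 ∈ ({i1} : Finset (Fin p)) := h ▸ (by simp)
      simp at this
      exact hne this
    rw [hγ] at hγ0
    simp only [hne1, hne2, hne3, if_false, if_true, if_pos rfl] at hγ0
    have : u - v - w + z = 0 := by linarith
    linarith
  -- Step 2: analytic part
  have hD0 : (0:ℝ) ∈ D := by constructor <;> norm_num
  have hDhalf : (1/2 : ℝ) ∈ D := by constructor <;> norm_num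
  obtain ⟨c, hc⟩ : ∃ c : ℝ, c = g (1/2) - g 0 := ⟨_, rfl⟩
  have hcpos : 0 < c := hc ▸ sub_pos.2 (hmono hD0 hDhalf (by norm_num))
  have hadd : ∀ x y : ℝ, x ∈ D → y ∈ D → x + y ∈ D →
      g (x + y) - g 0 = (g x - g 0) + (g y - g 0) := by
    intro x y hx hy hxy
    have := J4 (x + y) 0 x y hxy hD0 hx hy (by ring)
    linarith
  have hnat : ∀ n : ℕ, ∀ x : ℝ, 0 ≤ x → (n:ℝ) * x < 1 →
      g ((n:ℝ) * x) - g 0 = n * (g x - g 0) := by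
    intro n
    induction n with
    | zero => intro x _ _; simp
    | succ n ih =>
      intro x hx hlt
      have hn1 : (1:ℝ) ≤ (n:ℝ) + 1 := by
        have : (0:ℝ) ≤ (n:ℝ) := Nat.cast_nonneg n
        linarith
      have hcast : ((n+1 : ℕ):ℝ) = (n:ℝ) + 1 := by push_cast; ring
      rw [hcast] at hlt ⊢
      have hxlt : x < 1 := by nlinarith
      have hnx : (n:ℝ) * x < 1 := by nlinarith
      have hnx0 : 0 ≤ (n:ℝ) * x := by positivity
      have hstep := hadd ((n:ℝ) * x) x ⟨by linarith, hnx⟩ ⟨by linarith, hxlt⟩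
        ⟨by nlinarith, by nlinarith⟩
      have hih := ih x hx hnx
      have : ((n:ℝ) + 1) * x = (n:ℝ) * x + x := by ring
      rw [this, hstep, hih]
      ring
  have hrat : ∀ q : ℚ, 0 ≤ q → (q:ℝ) ≤ 1 → g ((q:ℝ)/2) - g 0 = q * c := by
    intro q hq hq1
    set m : ℕ := q.num.toNat with hm
    set n : ℕ := q.den with hn
    have hn0 : 0 < n := q.pos
    have hn0' : (0:ℝ) < (n:ℝ) := by exact_mod_cast hn0
    have hqmn : (q:ℝ) = (m:ℝ) / (n:ℝ) := by
      rw [Rat.cast_def]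
      congr 1
      rw [hm]
      have : (0:ℤ) ≤ q.num := Rat.num_nonneg.2 hq
      exact_mod_cast (Int.toNat_of_nonneg this).symm
    have hmn : (m:ℝ) ≤ (n:ℝ) := by
      rw [hqmn] at hq1
      calc (m:ℝ) = (m:ℝ)/(n:ℝ) * n := by field_simp
      _ ≤ 1 * n := by apply mul_le_mul_of_nonneg_right hq1 (le_of_lt hn0')
      _ = n := by ring
    have hs : (0:ℝ) ≤ 1/(2*(n:ℝ)) := by positivity
    have h1 : g ((n:ℝ) * (1/(2*(n:ℝ)))) - g 0 = n * (g (1/(2*(n:ℝ))) - g 0) := by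
      apply hnat n _ hs
      have : (n:ℝ) * (1/(2*(n:ℝ))) = 1/2 := by field_simp
      rw [this]; norm_num
    have hval : (n:ℝ) * (1/(2*(n:ℝ))) = 1/2 := by field_simp
    rw [hval] at h1
    have h2 : g ((m:ℝ) * (1/(2*(n:ℝ)))) - g 0 = m * (g (1/(2*(n:ℝ))) - g 0) := by
      apply hnat m _ hs
      calc (m:ℝ) * (1/(2*(n:ℝ))) ≤ (n:ℝ) * (1/(2*(n:ℝ))) :=
        mul_le_mul_of_nonneg_right hmn hs
      _ = 1/2 := hval
      _ < 1 := by norm_num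
    have hq2 : (q:ℝ)/2 = (m:ℝ) * (1/(2*(n:ℝ))) := by
      rw [hqmn]; field_simp
    have hn'' : (n:ℝ) ≠ 0 := ne_of_gt hn0'
    rw [hq2, h2, hqmn, hc, h1]
    field_simp
  have hreal : ∀ t : ℝ, 0 ≤ t → t ≤ 1 → g (t/2) - g 0 = t * c := by
    intro t ht ht1
    have hmemt : t/2 ∈ D := ⟨by linarith, by linarith⟩
    apply le_antisymm
    · apply le_of_forall_pos_le_add
      intro ε hε
      rcases eq_or_lt_of_le ht1 with h1 | h1
      · subst h1
        have h5 := hrat 1 (by norm_num) (by norm_num)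
        push_cast at h5
        rw [hc] at h5
        linarith
      · obtain ⟨δ, hδ⟩ : ∃ δ : ℝ, δ = min (1 - t) (ε / c) := ⟨_, rfl⟩
        have hδ0 : 0 < δ := hδ ▸ lt_min (by linarith) (by positivity)
        obtain ⟨q, hq1, hq2⟩ := exists_rat_btwn (show t < t + δ by linarith)
        have hq0 : (0:ℚ) ≤ q := by
          have : (0:ℝ) < (q:ℝ) ∨ (0:ℝ) ≤ (q:ℝ) := Or.inr (le_of_lt (lt_of_le_of_lt ht hq1))
          exact_mod_cast le_of_lt (lt_of_le_of_lt ht hq1)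
        have hqle1 : (q:ℝ) ≤ 1 := by
          have : δ ≤ 1 - t := hδ ▸ min_le_left _ _
          linarith
        have hmemq : (q:ℝ)/2 ∈ D := ⟨by
          have : (0:ℝ) ≤ (q:ℝ) := by exact_mod_cast hq0
          linarith, by linarith⟩
        have hgle : g (t/2) ≤ g ((q:ℝ)/2) :=
          le_of_lt (hmono hmemt hmemq (by linarith))
        have hqc := hrat q hq0 hqle1
        have hδc : δ * c ≤ ε := by
          have : δ ≤ ε / c := hδ ▸ min_le_right _ _
          calc δ * c ≤ (ε / c) * c := mul_le_mul_of_nonneg_right this (le_of_lt hcpos)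
          _ = ε := by field_simp
        have hmul : (q:ℝ) * c ≤ (t + δ) * c :=
          mul_le_mul_of_nonneg_right (le_of_lt hq2) (le_of_lt hcpos)
        nlinarith
    · apply le_of_forall_pos_le_add
      intro ε hε
      rcases eq_or_lt_of_le ht with h1 | h1
      · rw [← h1]
        simp
        linarith
      · obtain ⟨δ, hδ⟩ : ∃ δ : ℝ, δ = min t (ε / c) := ⟨_, rfl⟩
        have hδ0 : 0 < δ := hδ ▸ lt_min h1 (by positivity)
        obtain ⟨q, hq1, hq2⟩ := exists_rat_btwn (show t - δ < t by linarith)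
        have hq0 : (0:ℚ) ≤ q := by
          have hδt : δ ≤ t := hδ ▸ min_le_left _ _
          have : (0:ℝ) ≤ (q:ℝ) := by linarith
          exact_mod_cast this
        have hqle1 : (q:ℝ) ≤ 1 := by linarith
        have hmemq : (q:ℝ)/2 ∈ D := ⟨by
          have : (0:ℝ) ≤ (q:ℝ) := by exact_mod_cast hq0
          linarith, by linarith⟩
        have hgle : g ((q:ℝ)/2) ≤ g (t/2) :=
          le_of_lt (hmono hmemq hmemt (by linarith))
        have hqc := hrat q hq0 hqle1
        have hδc : δ * c ≤ ε := by
          have : δ ≤ ε / c := hδ ▸ min_le_right _ _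
          calc δ * c ≤ (ε / c) * c := mul_le_mul_of_nonneg_right this (le_of_lt hcpos)
          _ = ε := by field_simp
        have hmul : (t - δ) * c ≤ (q:ℝ) * c :=
          mul_le_mul_of_nonneg_right (le_of_lt hq1) (le_of_lt hcpos)
        nlinarith
  -- conclude
  refine ⟨2 * c, g 0, ?_⟩
  intro x hx
  rcases le_or_gt 0 x with hx0 | hx0
  · have hmemx2 : x/2 ∈ D := ⟨by linarith [hx.1], by linarith [hx.2]⟩
    have h2 := hadd (x/2) (x/2) hmemx2 hmemx2 (by rw [show x/2 + x/2 = x by ring]; exact hx)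
    rw [show x/2 + x/2 = x by ring] at h2
    have h3 := hreal x hx0 (le_of_lt hx.2)
    linear_combination h2 + 2 * h3
  · have hmemnx : -x ∈ D := ⟨by linarith [hx.2], by linarith [hx.1]⟩
    have hmemnx2 : -x/2 ∈ D := ⟨by linarith [hx.2], by linarith [hx.1]⟩
    have h2 := hadd (-x/2) (-x/2) hmemnx2 hmemnx2
      (by rw [show -x/2 + -x/2 = -x by ring]; exact hmemnx)
    rw [show -x/2 + -x/2 = -x by ring] at h2
    have h3 := hreal (-x) (by linarith) (by linarith [hx.1])
    have h4 := hadd x (-x) hx hmemnx (by rw [show x + -x = 0 by ring]; exact hD0)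
    rw [show x + -x = 0 by ring] at h4
    linear_combination -h4 - h2 - 2 * h3
end

section
/- Let B_1, …, B_n ∈ {-1, 1} and A_1, …, A_n ∈ {-1, 1}^p, and let λ > 0. The ridge estimator β̂_{rid,λ} = argmin_β ‖ℬ − 𝒜β‖_2² + λ‖β‖_2², which equals (𝒜ᵀ𝒜 + λI)^{-1} 𝒜ᵀ ℬ and always exists, satisfies ‖H_{2^p} β̂_{rid,λ}‖_∞ ≤ 1; equivalently, for every row v of H_{2^p} and r ∈ {-1, 1}, the estimated probability (1 + r vᵀ β̂_{rid,λ})/2 lies in [0, 1]. Furthermore, if v is a row of H_{2^p} such that no observation satisfies A_i^⊗ = v, then vᵀ β̂_{rid,λ} = 0, i.e., the estimated probability at that cell equals 1/2. -/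
lemma Had_eq_prod {p : ℕ} (T S : Finset (Fin p)) :
    Had p T S = ∏ j ∈ S, (if j ∈ T then (-1 : ℝ) else 1) := by
  rw [Finset.prod_ite_mem, Finset.prod_const]
  simp only [Had, Matrix.of_apply]
  rw [Finset.inter_comm]

lemma Had_orth {p : ℕ} (T T' : Finset (Fin p)) :
    ∑ S : Finset (Fin p), Had p T S * Had p T' S
      = if T = T' then (2 : ℝ) ^ p else 0 := by
  have key : ∀ S : Finset (Fin p), Had p T S * Had p T' S
      = ∏ j ∈ S, ((if j ∈ T then (-1 : ℝ) else 1) * (if j ∈ T' then (-1 : ℝ) else 1)) := by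
    intro S
    rw [Had_eq_prod, Had_eq_prod, ← Finset.prod_mul_distrib]
  have hsum : ∀ z : Fin p → ℝ,
      ∑ S : Finset (Fin p), ∏ j ∈ S, z j = ∏ j, (z j + 1) := by
    intro z
    rw [Finset.prod_add, ← Finset.powerset_univ]
    exact (Finset.sum_congr rfl fun t _ => by simp).symm
  simp only [key]
  rw [hsum]
  by_cases h : T = T'
  · subst h
    simp only [if_pos rfl]
    have : ∀ j : Fin p, ((if j ∈ T then (-1 : ℝ) else 1) * (if j ∈ T then (-1 : ℝ) else 1)) + 1
        = 2 := by
      intro j; by_cases hj : j ∈ T <;> simp [hj] <;> norm_num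
    rw [Finset.prod_congr rfl fun j _ => this j, Finset.prod_const]
    simp
  · rw [if_neg h]
    obtain ⟨j, hj⟩ : ∃ j, ¬(j ∈ T ↔ j ∈ T') := by
      by_contra hc
      push_neg at hc
      exact h (Finset.ext fun j => hc j)
    refine Finset.prod_eq_zero (Finset.mem_univ j) ?_
    by_cases h1 : j ∈ T <;> by_cases h2 : j ∈ T' <;> simp [h1, h2] at hj ⊢

lemma sum_sq_expand {ι : Type*} [Fintype ι] (u v : ι → ℝ) :
    ∑ i, (u i - v i) ^ 2
      = ∑ i, u i ^ 2 - 2 * ∑ i, u i * v i + ∑ i, v i ^ 2 := by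
  have : ∀ i : ι, (u i - v i) ^ 2 = u i ^ 2 - 2 * (u i * v i) + v i ^ 2 := fun i => by ring
  rw [Finset.sum_congr rfl fun i _ => this i, Finset.sum_add_distrib, Finset.sum_sub_distrib,
    ← Finset.mul_sum]

lemma sum_sq_expand' {ι : Type*} [Fintype ι] (u v : ι → ℝ) :
    ∑ i, (u i + v i) ^ 2
      = ∑ i, u i ^ 2 + 2 * ∑ i, u i * v i + ∑ i, v i ^ 2 := by
  have : ∀ i : ι, (u i + v i) ^ 2 = u i ^ 2 + 2 * (u i * v i) + v i ^ 2 := fun i => by ring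
  rw [Finset.sum_congr rfl fun i _ => this i, Finset.sum_add_distrib, Finset.sum_add_distrib,
    ← Finset.mul_sum]

/-- **Validity of ridge-regularized BELIEF** (Theorem 15).
Let `B_1, …, B_n ∈ {-1,1}` and `A_1, …, A_n ∈ {-1,1}^p`, let `𝒜` be the design matrix of
power vectors, and let `λ > 0`.  The ridge estimator
`β̂ = argmin_β ‖ℬ − 𝒜β‖₂² + λ‖β‖₂²`, which equals `(𝒜ᵀ𝒜 + λI)⁻¹ 𝒜ᵀ ℬ` and always
exists, satisfies `‖H_{2^p} β̂‖_∞ ≤ 1`; equivalently, for every row `v` of `H_{2^p}` and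
`r ∈ {-1,1}`, the estimated probability `(1 + r vᵀ β̂)/2` lies in `[0,1]`.  Furthermore, if
`v` is a row of `H_{2^p}` such that no observation satisfies `A_i^⊗ = v`, then
`vᵀ β̂ = 0`, i.e. the estimated probability at that cell equals `1/2`. -/
theorem ridge_belief_valid_probabilities
    {n p : ℕ} (Bv : Fin n → ℝ) (Av : Fin n → Fin p → ℝ)
    (hB : ∀ i, Bv i = -1 ∨ Bv i = 1)
    (hA : ∀ i j, Av i j = -1 ∨ Av i j = 1)
    (lam : ℝ) (hlam : 0 < lam) :
    letI 𝒜 : Matrix (Fin n) (Finset (Fin p)) ℝ :=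
      Matrix.of fun i S => ∏ j ∈ S, Av i j
    letI βr : Finset (Fin p) → ℝ :=
      ((𝒜.transpose * 𝒜 + lam • (1 : Matrix (Finset (Fin p)) (Finset (Fin p)) ℝ))⁻¹
        * 𝒜.transpose).mulVec Bv
    -- the ridge estimator always exists
    (IsUnit (𝒜.transpose * 𝒜 + lam • (1 : Matrix (Finset (Fin p)) (Finset (Fin p)) ℝ))) ∧
    -- and is the minimizer of the ridge objective
    (∀ β : Finset (Fin p) → ℝ,
      (∑ i : Fin n, (Bv i - 𝒜.mulVec βr i) ^ 2) + lam * ∑ S : Finset (Fin p), βr S ^ 2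
        ≤ (∑ i : Fin n, (Bv i - 𝒜.mulVec β i) ^ 2)
            + lam * ∑ S : Finset (Fin p), β S ^ 2) ∧
    -- ‖H β̂‖_∞ ≤ 1
    (∀ T : Finset (Fin p), |(Had p).mulVec βr T| ≤ 1) ∧
    -- equivalently, all estimated cell probabilities lie in [0,1]
    (∀ T : Finset (Fin p), ∀ r : ℝ, r = -1 ∨ r = 1 →
      (1 + r * (Had p).mulVec βr T) / 2 ∈ Set.Icc (0 : ℝ) 1) ∧
    -- empty cells receive estimated probability 1/2
    (∀ T : Finset (Fin p),
      (∀ i : Fin n, (fun S => ∏ j ∈ S, Av i j) ≠ fun S => Had p T S) →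
      (Had p).mulVec βr T = 0) := by
  set 𝒜 : Matrix (Fin n) (Finset (Fin p)) ℝ :=
      Matrix.of fun i S => ∏ j ∈ S, Av i j with h𝒜
  set M : Matrix (Finset (Fin p)) (Finset (Fin p)) ℝ :=
      𝒜.transpose * 𝒜 + lam • (1 : Matrix (Finset (Fin p)) (Finset (Fin p)) ℝ) with hM
  set βr : Finset (Fin p) → ℝ := (M⁻¹ * 𝒜.transpose).mulVec Bv with hβr
  -- the rows of 𝒜 are rows of the Hadamard matrix
  set Ti : Fin n → Finset (Fin p) :=
      fun i => Finset.univ.filter (fun j => Av i j = -1) with hTi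
  have hAv : ∀ i j, Av i j = if j ∈ Ti i then (-1 : ℝ) else 1 := by
    intro i j
    by_cases h : Av i j = -1
    · simp [hTi, h]
    · rcases hA i j with h' | h'
      · exact absurd h' h
      · simp [hTi, h', h]
  have hArow : ∀ i S, 𝒜 i S = Had p (Ti i) S := by
    intro i S
    rw [Had_eq_prod, h𝒜, Matrix.of_apply]
    exact Finset.prod_congr rfl fun j _ => hAv i j
  -- positive definiteness and invertibility
  have hMpd : M.PosDef := by
    have h1 : (𝒜.transpose * 𝒜).PosSemidef := by
      have := Matrix.posSemidef_conjTranspose_mul_self 𝒜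
      rwa [Matrix.conjTranspose_eq_transpose_of_trivial] at this
    have h2 : (lam • (1 : Matrix (Finset (Fin p)) (Finset (Fin p)) ℝ)).PosDef := by
      rw [Matrix.smul_one_eq_diagonal]
      exact Matrix.PosDef.diagonal fun _ => hlam
    exact Matrix.PosDef.posSemidef_add h1 h2
  have hunit : IsUnit M := hMpd.isUnit
  -- the normal equation
  have hnormal : M.mulVec βr = 𝒜.transpose.mulVec Bv := by
    rw [hβr, Matrix.mulVec_mulVec, ← Matrix.mul_assoc,
      Matrix.mul_nonsing_inv _ ((Matrix.isUnit_iff_isUnit_det M).mp hunit), Matrix.one_mul]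
  have hresid : ∀ S, 𝒜.transpose.mulVec Bv S - 𝒜.transpose.mulVec (𝒜.mulVec βr) S
      = lam * βr S := by
    intro S
    have h1 : 𝒜.transpose.mulVec (𝒜.mulVec βr) = (𝒜.transpose * 𝒜).mulVec βr :=
      Matrix.mulVec_mulVec _ _ _
    have h2 := congrFun hnormal S
    rw [hM, Matrix.add_mulVec, Matrix.smul_mulVec, Matrix.one_mulVec] at h2
    simp only [Pi.add_apply, Pi.smul_apply, smul_eq_mul] at h2
    rw [h1]
    linarith [h2]
  have hmin : ∀ β : Finset (Fin p) → ℝ,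
      (∑ i : Fin n, (Bv i - 𝒜.mulVec βr i) ^ 2) + lam * ∑ S : Finset (Fin p), βr S ^ 2
        ≤ (∑ i : Fin n, (Bv i - 𝒜.mulVec β i) ^ 2)
            + lam * ∑ S : Finset (Fin p), β S ^ 2 := by
    intro β
    set δ : Finset (Fin p) → ℝ := fun S => β S - βr S with hδ
    have hβeq : β = fun S => βr S + δ S := by funext S; simp [hδ]
    have hAβ : ∀ i, 𝒜.mulVec β i = 𝒜.mulVec βr i + 𝒜.mulVec δ i := by
      intro i
      rw [hβeq]
      have : (fun S => βr S + δ S) = βr + δ := rfl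
      rw [this, Matrix.mulVec_add]
      rfl
    -- cross term vanishes
    have hcross : ∑ i : Fin n, (Bv i - 𝒜.mulVec βr i) * 𝒜.mulVec δ i
        = lam * ∑ S : Finset (Fin p), βr S * δ S := by
      have h1 : ∑ i : Fin n, (Bv i - 𝒜.mulVec βr i) * 𝒜.mulVec δ i
          = dotProduct (fun i => Bv i - 𝒜.mulVec βr i) (𝒜.mulVec δ) := rfl
      rw [h1, Matrix.dotProduct_mulVec, ← Matrix.mulVec_transpose]
      have h2 : 𝒜.transpose.mulVec (fun i => Bv i - 𝒜.mulVec βr i)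
          = fun S => lam * βr S := by
        funext S
        have : (fun i => Bv i - 𝒜.mulVec βr i) = Bv - 𝒜.mulVec βr := rfl
        rw [this, Matrix.mulVec_sub]
        simpa using hresid S
      rw [h2]
      simp only [dotProduct, Finset.mul_sum, mul_assoc]
    have hexp1 : ∑ i : Fin n, (Bv i - 𝒜.mulVec β i) ^ 2
        = ∑ i : Fin n, (Bv i - 𝒜.mulVec βr i) ^ 2
          - 2 * ∑ i : Fin n, (Bv i - 𝒜.mulVec βr i) * 𝒜.mulVec δ i
          + ∑ i : Fin n, (𝒜.mulVec δ i) ^ 2 := by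
      have : ∀ i, (Bv i - 𝒜.mulVec β i) ^ 2
          = ((Bv i - 𝒜.mulVec βr i) - 𝒜.mulVec δ i) ^ 2 := by
        intro i; rw [hAβ i]; ring
      rw [Finset.sum_congr rfl fun i _ => this i]
      exact sum_sq_expand _ _
    have hexp2 : ∑ S : Finset (Fin p), β S ^ 2
        = ∑ S : Finset (Fin p), βr S ^ 2 + 2 * ∑ S : Finset (Fin p), βr S * δ S
          + ∑ S : Finset (Fin p), δ S ^ 2 := by
      have : ∀ S, β S ^ 2 = (βr S + δ S) ^ 2 := by intro S; simp [hδ]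
      rw [Finset.sum_congr rfl fun S _ => this S]
      exact sum_sq_expand' _ _
    have hs1 : (0:ℝ) ≤ ∑ i : Fin n, (𝒜.mulVec δ i) ^ 2 :=
      Finset.sum_nonneg fun i _ => sq_nonneg _
    have hs2 : (0:ℝ) ≤ ∑ S : Finset (Fin p), δ S ^ 2 :=
      Finset.sum_nonneg fun S _ => sq_nonneg _
    rw [hexp1, hexp2, hcross]
    nlinarith [hs1, hs2, hlam]
  have key : ∀ T : Finset (Fin p),
      ((2:ℝ) ^ p * (Finset.univ.filter (fun i => Ti i = T)).card + lam)
          * (Had p).mulVec βr T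
        = (2:ℝ) ^ p * ∑ i ∈ Finset.univ.filter (fun i => Ti i = T), Bv i := by
    intro T
    set J : Finset (Fin n) := Finset.univ.filter (fun i => Ti i = T) with hJ
    set γ : ℝ := (Had p).mulVec βr T with hγ
    -- adjoint computation: for any v, ∑_S Had T S * (𝒜ᵀ v) S = 2^p ∑_{i ∈ J} v i
    have hAdj : ∀ v : Fin n → ℝ,
        ∑ S : Finset (Fin p), Had p T S * 𝒜.transpose.mulVec v S
          = (2:ℝ) ^ p * ∑ i ∈ J, v i := by
      intro v
      have step : ∀ i : Fin n, ∑ S : Finset (Fin p), Had p T S * (𝒜 i S * v i)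
          = if Ti i = T then (2:ℝ) ^ p * v i else 0 := by
        intro i
        have h1 : ∑ S : Finset (Fin p), Had p T S * 𝒜 i S
            = if T = Ti i then (2:ℝ) ^ p else 0 := by
          rw [Finset.sum_congr rfl fun S _ => by rw [hArow i S]]
          exact Had_orth T (Ti i)
        have h2 : ∑ S : Finset (Fin p), Had p T S * (𝒜 i S * v i)
            = (∑ S : Finset (Fin p), Had p T S * 𝒜 i S) * v i := by
          rw [Finset.sum_mul]
          exact Finset.sum_congr rfl fun S _ => by ring
        rw [h2, h1]
        by_cases h : T = Ti i
        · rw [if_pos h, if_pos h.symm]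
        · rw [if_neg h, if_neg (Ne.symm h), zero_mul]
      calc ∑ S : Finset (Fin p), Had p T S * 𝒜.transpose.mulVec v S
          = ∑ S : Finset (Fin p), ∑ i : Fin n, Had p T S * (𝒜 i S * v i) := by
            refine Finset.sum_congr rfl fun S _ => ?_
            simp only [Matrix.mulVec, dotProduct, Matrix.transpose_apply,
              Finset.mul_sum]
        _ = ∑ i : Fin n, ∑ S : Finset (Fin p), Had p T S * (𝒜 i S * v i) :=
            Finset.sum_comm
        _ = ∑ i : Fin n, (if Ti i = T then (2:ℝ) ^ p * v i else 0) :=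
            Finset.sum_congr rfl fun i _ => step i
        _ = ∑ i ∈ J, (2:ℝ) ^ p * v i := (Finset.sum_filter _ _).symm
        _ = (2:ℝ) ^ p * ∑ i ∈ J, v i := by rw [Finset.mul_sum]
    -- apply Had row T to the normal equation
    have hLHS : ∑ S : Finset (Fin p), Had p T S * M.mulVec βr S
        = (2:ℝ) ^ p * ((J.card : ℝ) * γ) + lam * γ := by
      have hMsplit : ∀ S, M.mulVec βr S
          = 𝒜.transpose.mulVec (𝒜.mulVec βr) S + lam * βr S := by
        intro S
        rw [hM, Matrix.add_mulVec, Matrix.smul_mulVec, Matrix.one_mulVec,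
          ← Matrix.mulVec_mulVec]
        simp
      rw [Finset.sum_congr rfl fun S _ => by rw [hMsplit S]]
      have hsplit : ∑ S : Finset (Fin p),
          Had p T S * (𝒜.transpose.mulVec (𝒜.mulVec βr) S + lam * βr S)
          = ∑ S : Finset (Fin p), Had p T S * 𝒜.transpose.mulVec (𝒜.mulVec βr) S
            + lam * ∑ S : Finset (Fin p), Had p T S * βr S := by
        rw [Finset.mul_sum, ← Finset.sum_add_distrib]
        exact Finset.sum_congr rfl fun S _ => by ring
      rw [hsplit, hAdj]
      have hγ' : ∑ S : Finset (Fin p), Had p T S * βr S = γ := rfl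
      have hconst : ∑ i ∈ J, 𝒜.mulVec βr i = (J.card : ℝ) * γ := by
        have : ∀ i ∈ J, 𝒜.mulVec βr i = γ := by
          intro i hi
          have hiT : Ti i = T := (Finset.mem_filter.mp hi).2
          show ∑ S : Finset (Fin p), 𝒜 i S * βr S = γ
          rw [← hγ']
          exact Finset.sum_congr rfl fun S _ => by rw [hArow i S, hiT]
        rw [Finset.sum_congr rfl this, Finset.sum_const, nsmul_eq_mul]
      rw [hconst, hγ']
    have hRHS : ∑ S : Finset (Fin p), Had p T S * 𝒜.transpose.mulVec Bv S
        = (2:ℝ) ^ p * ∑ i ∈ J, Bv i := hAdj Bv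
    have heq : (2:ℝ) ^ p * ((J.card : ℝ) * γ) + lam * γ
        = (2:ℝ) ^ p * ∑ i ∈ J, Bv i := by
      rw [← hLHS, ← hRHS]
      exact Finset.sum_congr rfl fun S _ => by rw [hnormal]
    rw [← heq]; ring
  -- the absolute-value bound
  have habs : ∀ T : Finset (Fin p), |(Had p).mulVec βr T| ≤ 1 := by
    intro T
    have hk := key T
    set J : Finset (Fin n) := Finset.univ.filter (fun i => Ti i = T) with hJ
    set γ : ℝ := (Had p).mulVec βr T with hγ
    have hc : |∑ i ∈ J, Bv i| ≤ (J.card : ℝ) := by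
      calc |∑ i ∈ J, Bv i| ≤ ∑ i ∈ J, |Bv i| := Finset.abs_sum_le_sum_abs _ _
        _ = ∑ i ∈ J, 1 := Finset.sum_congr rfl fun i _ => by
            rcases hB i with h | h <;> rw [h] <;> norm_num
        _ = (J.card : ℝ) := by simp
    have hp2 : (0:ℝ) < (2:ℝ) ^ p := by positivity
    have hpos : (0:ℝ) < (2:ℝ) ^ p * (J.card : ℝ) + lam :=
      add_pos_of_nonneg_of_pos (mul_nonneg hp2.le (Nat.cast_nonneg _)) hlam
    have habs_eq : ((2:ℝ) ^ p * (J.card : ℝ) + lam) * |γ|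
        = (2:ℝ) ^ p * |∑ i ∈ J, Bv i| := by
      rw [← abs_of_pos hpos, ← abs_mul, hk, abs_mul, abs_of_pos hp2]
    nlinarith [abs_nonneg γ, abs_nonneg (∑ i ∈ J, Bv i), hc, habs_eq, hp2, hlam]
  refine ⟨hunit, hmin, habs, ?_, ?_⟩
  · -- probabilities in [0,1]
    intro T r hr
    have h := habs T
    have h' := abs_le.mp h
    rcases hr with h1 | h1 <;> subst h1 <;>
      refine Set.mem_Icc.mpr ⟨?_, ?_⟩ <;>
      first
      | (apply div_nonneg _ (by norm_num : (0:ℝ) ≤ 2); nlinarith [h'.1, h'.2])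
      | (rw [div_le_one (by norm_num : (0:ℝ) < 2)]; nlinarith [h'.1, h'.2])
  · -- empty cells
    intro T hT
    have hJ0 : Finset.univ.filter (fun i => Ti i = T) = ∅ := by
      rw [Finset.filter_eq_empty_iff]
      intro i _
      intro hiT
      apply hT i
      funext S
      rw [← hiT]
      exact hArow i S
    have hk := key T
    rw [hJ0] at hk
    simp only [Finset.card_empty, Nat.cast_zero, mul_zero, zero_add,
      Finset.sum_empty] at hk
    rcases mul_eq_zero.mp hk with h | h
    · exact absurd h (ne_of_gt hlam)
    · exact h
end
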